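/- arXiv:1007.0611 — 2 statements merged into one kernel-verified Lean document; each statement's English description precedes it below -/
import Mathlib

section
/- For any two perfect noncrossing matchings a and b on n points (n even), there exists a matching c with d(a,b) = d(a,c) + d(c,b) and a minimal sequence from a to b of the form a ← ⋯ ← c → ⋯ → b (all backward moves followed by all forward moves); i.e., c ≼ a and c ≼ b in the partial order generated by →. -/
/-- A noncrossing matching of type `(n-k, k)`: `k` pairwise-noncrossing arcs above a
horizontal line of `n` vertices (labelled `1,…,n`); the remaining `n-2k` vertices carry
rays, and no ray lies beneath an arc (every vertex strictly between the endpoints of an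
arc is an endpoint of some arc). -/
structure NCMatching (n k : ℕ) where
  arcs : Finset (ℕ × ℕ)
  card_arcs : arcs.card = k
  mem_range : ∀ p ∈ arcs, 1 ≤ p.1 ∧ p.1 < p.2 ∧ p.2 ≤ n
  endpoints_distinct : ∀ p ∈ arcs, ∀ q ∈ arcs, p ≠ q →
    p.1 ≠ q.1 ∧ p.1 ≠ q.2 ∧ p.2 ≠ q.1 ∧ p.2 ≠ q.2
  noncross : ∀ p ∈ arcs, ∀ q ∈ arcs, ¬ (p.1 < q.1 ∧ q.1 < p.2 ∧ p.2 < q.2)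
  no_ray_under : ∀ p ∈ arcs, ∀ r, p.1 < r → r < p.2 → ∃ q ∈ arcs, r = q.1 ∨ r = q.2

/-- Vertex `i` carries a ray of the matching `m`. -/
def NCMatching.IsRay {n k : ℕ} (m : NCMatching n k) (i : ℕ) : Prop :=
  1 ≤ i ∧ i ≤ n ∧ ∀ p ∈ m.arcs, p.1 ≠ i ∧ p.2 ≠ i

/-- The adjacency relation on vertices coming from the glued one-manifold `a w(b)`:
two vertices are related if an arc of `a` or an arc of (the reflection of) `b` joins them. -/
def glueRel {n k : ℕ} (a b : NCMatching n k) (i j : ℕ) : Prop :=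
  (i, j) ∈ a.arcs ∨ (j, i) ∈ a.arcs ∨ (i, j) ∈ b.arcs ∨ (j, i) ∈ b.arcs

/-- Two vertices lie on the same connected component of `a w(b)`. -/
def Conn {n k : ℕ} (a b : NCMatching n k) : ℕ → ℕ → Prop :=
  Relation.ReflTransGen (glueRel a b)

/-- The glue relation transported to `Fin n` (the vertex `i : Fin n` has label `i+1`). -/
def glueRelF {n k : ℕ} (a b : NCMatching n k) (i j : Fin n) : Prop :=
  glueRel a b ((i : ℕ) + 1) ((j : ℕ) + 1)

/-- `comps a b = |a w(b)|`, the number of connected components (circles and line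
segments) of the glued one-manifold `a w(b)`. -/
noncomputable def comps {n k : ℕ} (a b : NCMatching n k) : ℕ :=
  Nat.card (Quot (glueRelF a b))

/-- The elementary move `a → b`: either two unnested arcs `(i,j), (l,m)` of `a` are replaced
by the nested arcs `(i,m), (j,l)` on the same four vertices, or an arc-ray pair
`(i), (j,l)` with `i<j<l` is replaced by `(i,j), (l)`; the matchings agree elsewhere. -/
def Move {n k : ℕ} (a b : NCMatching n k) : Prop :=
  (∃ i j l m : ℕ, i < j ∧ j < l ∧ l < m ∧ (i, j) ∈ a.arcs ∧ (l, m) ∈ a.arcs ∧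
    b.arcs = insert (i, m) (insert (j, l) ((a.arcs.erase (i, j)).erase (l, m)))) ∨
  (∃ i j l : ℕ, i < j ∧ j < l ∧ a.IsRay i ∧ (j, l) ∈ a.arcs ∧
    b.arcs = insert (i, j) (a.arcs.erase (j, l)))

/-- A sequence of matchings in which each consecutive pair is related by `→` or `←`. -/
def IsMoveSeq {n k d : ℕ} (f : Fin (d + 1) → NCMatching n k) : Prop :=
  ∀ i : Fin d, Move (f i.castSucc) (f i.succ) ∨ Move (f i.succ) (f i.castSucc)

/-- The distance `d(a,b)`: the minimal number of moves `→` or `←` needed to go from `a` to `b`. -/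
noncomputable def mdist {n k : ℕ} (a b : NCMatching n k) : ℕ :=
  sInf {d : ℕ | ∃ f : Fin (d + 1) → NCMatching n k,
    f 0 = a ∧ f (Fin.last d) = b ∧ IsMoveSeq f}

namespace Valley

lemma ncm_ext {n k : ℕ} {a b : NCMatching n k} (h : a.arcs = b.arcs) : a = b := by
  cases a; cases b; simp_all

/-- Raw coverage: a family of m disjoint arcs in [1, 2m] covers everything. -/
lemma raw_coverage {m : ℕ} (s : Finset (ℕ × ℕ)) (h1 : s.card = m)
    (h2 : ∀ p ∈ s, 1 ≤ p.1 ∧ p.1 < p.2 ∧ p.2 ≤ 2 * m)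
    (h3 : ∀ p ∈ s, ∀ q ∈ s, p ≠ q → p.1 ≠ q.1 ∧ p.1 ≠ q.2 ∧ p.2 ≠ q.1 ∧ p.2 ≠ q.2)
    (r : ℕ) (hr1 : 1 ≤ r) (hr2 : r ≤ 2 * m) : ∃ p ∈ s, r = p.1 ∨ r = p.2 := by
  classical
  set E : Finset ℕ := s.biUnion (fun p => {p.1, p.2}) with hE
  have hdisj : ∀ p ∈ s, ∀ q ∈ s, p ≠ q →
      Disjoint ({p.1, p.2} : Finset ℕ) {q.1, q.2} := by
    intro p hp q hq hpq
    have := h3 p hp q hq hpq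
    simp [Finset.disjoint_left]
    tauto
  have hcard : E.card = 2 * m := by
    rw [hE, Finset.card_biUnion hdisj]
    have : ∀ p ∈ s, ({p.1, p.2} : Finset ℕ).card = 2 := by
      intro p hp
      have := (h2 p hp).2.1
      rw [Finset.card_insert_of_notMem (by simp; omega), Finset.card_singleton]
    rw [Finset.sum_congr rfl this, Finset.sum_const, h1]
    ring
  have hsub : E ⊆ Finset.Icc 1 (2 * m) := by
    intro x hx
    rw [hE, Finset.mem_biUnion] at hx
    obtain ⟨p, hp, hxp⟩ := hx
    have := h2 p hp
    simp at hxp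
    simp [Finset.mem_Icc]
    omega
  have hEq : E = Finset.Icc 1 (2 * m) := by
    apply Finset.eq_of_subset_of_card_le hsub
    rw [hcard, Nat.card_Icc]
    omega
  have hrE : r ∈ E := by rw [hEq]; simp [Finset.mem_Icc]; omega
  rw [hE, Finset.mem_biUnion] at hrE
  obtain ⟨p, hp, hrp⟩ := hrE
  simp at hrp
  exact ⟨p, hp, by tauto⟩

lemma coverage {m : ℕ} (x : NCMatching (2 * m) m) (r : ℕ) (hr1 : 1 ≤ r) (hr2 : r ≤ 2 * m) :
    ∃ p ∈ x.arcs, r = p.1 ∨ r = p.2 :=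
  raw_coverage x.arcs x.card_arcs x.mem_range x.endpoints_distinct r hr1 hr2

lemma no_isRay {m : ℕ} (x : NCMatching (2 * m) m) (i : ℕ) : ¬ x.IsRay i := by
  rintro ⟨h1, h2, h3⟩
  obtain ⟨p, hp, hrp⟩ := coverage x i h1 h2
  have := h3 p hp
  tauto

lemma move_iff {m : ℕ} {a b : NCMatching (2 * m) m} : Move a b ↔
    ∃ i j l mm : ℕ, i < j ∧ j < l ∧ l < mm ∧ (i, j) ∈ a.arcs ∧ (l, mm) ∈ a.arcs ∧
      b.arcs = insert (i, mm) (insert (j, l) ((a.arcs.erase (i, j)).erase (l, mm))) := by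
  constructor
  · rintro (h | ⟨i, j, l, _, _, hray, _⟩)
    · exact h
    · exact absurd hray (no_isRay a i)
  · intro h; exact Or.inl h


lemma eq_of_shared {n k : ℕ} (x : NCMatching n k) {p q : ℕ × ℕ}
    (hp : p ∈ x.arcs) (hq : q ∈ x.arcs)
    (h : p.1 = q.1 ∨ p.1 = q.2 ∨ p.2 = q.1 ∨ p.2 = q.2) : p = q := by
  by_contra hne
  have := x.endpoints_distinct p hp q hq hne
  tauto

/-- All the facts about a move `u → x` with witness quadruple `i<j<l<mm`. -/
structure MW {m : ℕ} (u x : NCMatching (2 * m) m) (i j l mm : ℕ) : Prop where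
  hij : i < j
  hjl : j < l
  hlm : l < mm
  mem_ij : (i, j) ∈ u.arcs
  mem_lm : (l, mm) ∈ u.arcs
  mem_im : (i, mm) ∈ x.arcs
  mem_jl : (j, l) ∈ x.arcs
  nmem_ij : (i, j) ∉ x.arcs
  nmem_lm : (l, mm) ∉ x.arcs
  nmem_im : (i, mm) ∉ u.arcs
  nmem_jl : (j, l) ∉ u.arcs
  xeq : x.arcs = insert (i, mm) (insert (j, l) ((u.arcs.erase (i, j)).erase (l, mm)))
  ueq : u.arcs = insert (i, j) (insert (l, mm) ((x.arcs.erase (i, mm)).erase (j, l)))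
  between : ∀ p ∈ x.arcs, ¬ (i < p.1 ∧ p.1 < j ∧ l < p.2 ∧ p.2 < mm)

lemma move_inv {m : ℕ} {u x : NCMatching (2 * m) m} (h : Move u x) :
    ∃ i j l mm, MW u x i j l mm := by
  rw [move_iff] at h
  obtain ⟨i, j, l, mm, hij, hjl, hlm, mem_ij, mem_lm, xeq⟩ := h
  have nmem_im : (i, mm) ∉ u.arcs := by
    intro hmem
    have := u.endpoints_distinct (i, mm) hmem (i, j) mem_ij (by simp; omega)
    simp at this
  have nmem_jl : (j, l) ∉ u.arcs := by
    intro hmem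
    have := u.endpoints_distinct (i, j) mem_ij (j, l) hmem (by simp; omega)
    simp at this
  have mem_im : (i, mm) ∈ x.arcs := by rw [xeq]; simp
  have mem_jl : (j, l) ∈ x.arcs := by rw [xeq]; simp [Finset.mem_insert]
  have nmem_ij : (i, j) ∉ x.arcs := by
    rw [xeq]; simp [Finset.mem_insert, Finset.mem_erase]; omega
  have nmem_lm : (l, mm) ∉ x.arcs := by
    rw [xeq]; simp [Finset.mem_insert, Finset.mem_erase]; omega
  refine ⟨i, j, l, mm, ⟨hij, hjl, hlm, mem_ij, mem_lm, mem_im, mem_jl, nmem_ij,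
    nmem_lm, nmem_im, nmem_jl, xeq, ?_, ?_⟩⟩
  · ext p
    rw [xeq]
    simp only [Finset.mem_insert, Finset.mem_erase, ne_eq]
    constructor
    · intro hp
      by_cases h1 : p = (i, j)
      · exact Or.inl h1
      by_cases h2 : p = (l, mm)
      · exact Or.inr (Or.inl h2)
      refine Or.inr (Or.inr ⟨?_, ?_, Or.inr (Or.inr ⟨h2, h1, hp⟩)⟩)
      · rintro rfl; exact nmem_jl hp
      · rintro rfl; exact nmem_im hp
    · rintro (rfl | rfl | ⟨hjl', him', (rfl | rfl | ⟨_, _, hp⟩)⟩)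
      · exact mem_ij
      · exact mem_lm
      · exact absurd rfl him'
      · exact absurd rfl hjl'
      · exact hp
  · rintro ⟨p1, p2⟩ hp ⟨h1, h2, h3, h4⟩
    have hpu : (p1, p2) ∈ u.arcs := by
      rw [xeq] at hp
      simp only [Finset.mem_insert, Finset.mem_erase, Prod.mk.injEq] at hp
      rcases hp with ⟨e1, e2⟩ | ⟨e1, e2⟩ | ⟨_, _, hpu⟩
      · omega
      · omega
      · exact hpu
    have := u.noncross (i, j) mem_ij (p1, p2) hpu
    simp at this
    omega

/-- Un-nesting construction: given nested arcs `(i,mm) ⊃ (j,l)` of `x` with nothing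
strictly between them, the un-nested matching `u` exists with `Move u x`. -/
lemma unnest {m : ℕ} (x : NCMatching (2 * m) m) (i j l mm : ℕ)
    (hij : i < j) (hjl : j < l) (hlm : l < mm)
    (mem_im : (i, mm) ∈ x.arcs) (mem_jl : (j, l) ∈ x.arcs)
    (between : ∀ p ∈ x.arcs, ¬ (i < p.1 ∧ p.1 < j ∧ l < p.2 ∧ p.2 < mm)) :
    ∃ u : NCMatching (2 * m) m, Move u x ∧
      u.arcs = insert (i, j) (insert (l, mm) ((x.arcs.erase (i, mm)).erase (j, l))) := by
  classical
  have hne0 : ((i, mm) : ℕ × ℕ) ≠ (j, l) := by simp; omega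
  have nmem_ij : (i, j) ∉ x.arcs := by
    intro hmem
    have := eq_of_shared x hmem mem_im (Or.inl rfl)
    simp at this; omega
  have nmem_lm : (l, mm) ∉ x.arcs := by
    intro hmem
    have := eq_of_shared x hmem mem_im (by simp)
    simp at this; omega
  have fresh : ∀ p ∈ x.arcs, p ≠ (i, mm) → p ≠ (j, l) →
      p.1 ≠ i ∧ p.1 ≠ j ∧ p.1 ≠ l ∧ p.1 ≠ mm ∧ p.2 ≠ i ∧ p.2 ≠ j ∧ p.2 ≠ l ∧ p.2 ≠ mm := by
    intro p hp hp1 hp2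
    refine ⟨?_, ?_, ?_, ?_, ?_, ?_, ?_, ?_⟩ <;> intro heq
    · exact hp1 (eq_of_shared x hp mem_im (Or.inl heq))
    · exact hp2 (eq_of_shared x hp mem_jl (Or.inl heq))
    · exact hp2 (eq_of_shared x hp mem_jl (Or.inr (Or.inl heq)))
    · exact hp1 (eq_of_shared x hp mem_im (Or.inr (Or.inl heq)))
    · exact hp1 (eq_of_shared x hp mem_im (Or.inr (Or.inr (Or.inl heq))))
    · exact hp2 (eq_of_shared x hp mem_jl (Or.inr (Or.inr (Or.inl heq))))
    · exact hp2 (eq_of_shared x hp mem_jl (Or.inr (Or.inr (Or.inr heq))))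
    · exact hp1 (eq_of_shared x hp mem_im (Or.inr (Or.inr (Or.inr heq))))
  set s : Finset (ℕ × ℕ) :=
    insert (i, j) (insert (l, mm) ((x.arcs.erase (i, mm)).erase (j, l))) with hs
  have mem_s : ∀ p : ℕ × ℕ, p ∈ s ↔
      (p = (i, j) ∨ p = (l, mm) ∨ (p ≠ (j, l) ∧ p ≠ (i, mm) ∧ p ∈ x.arcs)) := by
    intro p
    simp only [hs, Finset.mem_insert, Finset.mem_erase, ne_eq]
    try tauto
  have hm2 : 2 ≤ m := by
    rw [← x.card_arcs]
    exact Finset.one_lt_card.mpr ⟨(i, mm), mem_im, (j, l), mem_jl, hne0⟩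
  have hcard : s.card = m := by
    rw [hs]
    rw [Finset.card_insert_of_notMem, Finset.card_insert_of_notMem,
      Finset.card_erase_of_mem, Finset.card_erase_of_mem, x.card_arcs]
    · omega
    · exact mem_im
    · exact Finset.mem_erase.mpr ⟨by simp; omega, mem_jl⟩
    · intro hmem
      exact nmem_lm (Finset.mem_of_mem_erase (Finset.mem_of_mem_erase hmem))
    · intro hmem
      rcases Finset.mem_insert.mp hmem with h | h
      · simp at h; omega
      · exact nmem_ij (Finset.mem_of_mem_erase (Finset.mem_of_mem_erase h))
  have hrange : ∀ p ∈ s, 1 ≤ p.1 ∧ p.1 < p.2 ∧ p.2 ≤ 2 * m := by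
    intro p hp
    rcases (mem_s p).mp hp with rfl | rfl | ⟨_, _, hp⟩
    · have h1 := x.mem_range _ mem_im
      simp at h1 ⊢; omega
    · have h1 := x.mem_range _ mem_im
      simp at h1 ⊢; omega
    · exact x.mem_range p hp
  have hdist : ∀ p ∈ s, ∀ q ∈ s, p ≠ q →
      p.1 ≠ q.1 ∧ p.1 ≠ q.2 ∧ p.2 ≠ q.1 ∧ p.2 ≠ q.2 := by
    intro p hp q hq hpq
    rcases (mem_s p).mp hp with rfl | rfl | ⟨hp1, hp2, hpx⟩ <;>
      rcases (mem_s q).mp hq with rfl | rfl | ⟨hq1, hq2, hqx⟩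
    · simp at hpq
    · simp; omega
    · have := fresh q hqx hq2 hq1; simp at this ⊢; omega
    · simp; omega
    · simp at hpq
    · have := fresh q hqx hq2 hq1; simp at this ⊢; omega
    · have := fresh p hpx hp2 hp1; simp at this ⊢; omega
    · have := fresh p hpx hp2 hp1; simp at this ⊢; omega
    · exact x.endpoints_distinct p hpx q hqx hpq
  have hcross : ∀ p ∈ s, ∀ q ∈ s, ¬ (p.1 < q.1 ∧ q.1 < p.2 ∧ p.2 < q.2) := by
    intro p hp q hq
    rcases (mem_s p).mp hp with rfl | rfl | ⟨hp1, hp2, hpx⟩ <;>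
      rcases (mem_s q).mp hq with rfl | rfl | ⟨hq1, hq2, hqx⟩
    · simp
    · simp; omega
    · -- p = (i,j), q old
      obtain ⟨q1, q2⟩ := q
      have f := fresh _ hqx hq2 hq1
      have n1 := x.noncross (i, mm) mem_im (q1, q2) hqx
      have n2 := x.noncross (q1, q2) hqx (i, mm) mem_im
      have n3 := x.noncross (j, l) mem_jl (q1, q2) hqx
      have n4 := x.noncross (q1, q2) hqx (j, l) mem_jl
      have n5 := between (q1, q2) hqx
      simp at f n1 n2 n3 n4 n5 ⊢
      omega
    · simp; omega
    · simp
    · -- p = (l,mm), q old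
      obtain ⟨q1, q2⟩ := q
      have n1 := x.noncross (i, mm) mem_im (q1, q2) hqx
      simp at n1 ⊢
      omega
    · -- p old, q = (i,j)
      obtain ⟨p1, p2⟩ := p
      have n1 := x.noncross (p1, p2) hpx (i, mm) mem_im
      simp at n1 ⊢
      omega
    · -- p old, q = (l,mm)
      obtain ⟨p1, p2⟩ := p
      have f := fresh _ hpx hp2 hp1
      have n1 := x.noncross (i, mm) mem_im (p1, p2) hpx
      have n2 := x.noncross (p1, p2) hpx (i, mm) mem_im
      have n3 := x.noncross (j, l) mem_jl (p1, p2) hpx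
      have n4 := x.noncross (p1, p2) hpx (j, l) mem_jl
      have n5 := between (p1, p2) hpx
      simp at f n1 n2 n3 n4 n5 ⊢
      omega
    · exact x.noncross p hpx q hqx
  refine ⟨⟨s, hcard, hrange, hdist, hcross, ?_⟩, ?_, rfl⟩
  · intro p hp r h1 h2
    have hb := hrange p hp
    exact raw_coverage s hcard hrange hdist r (by omega) (by omega)
  · rw [move_iff]
    refine ⟨i, j, l, mm, hij, hjl, hlm, by rw [mem_s]; tauto, by rw [mem_s]; tauto, ?_⟩
    show x.arcs = insert (i, mm) (insert (j, l) ((s.erase (i, j)).erase (l, mm)))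
    ext p
    simp only [Finset.mem_insert, Finset.mem_erase, ne_eq, mem_s]
    constructor
    · intro hp
      by_cases h1 : p = (i, mm)
      · exact Or.inl h1
      by_cases h2 : p = (j, l)
      · exact Or.inr (Or.inl h2)
      refine Or.inr (Or.inr ⟨?_, ?_, Or.inr (Or.inr ⟨h2, h1, hp⟩)⟩)
      · rintro rfl; exact nmem_lm hp
      · rintro rfl; exact nmem_ij hp
    · rintro (rfl | rfl | ⟨hlm', hij', (rfl | rfl | ⟨_, _, hp⟩)⟩)
      · exact mem_im
      · exact mem_jl
      · exact absurd rfl hij'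
      · exact absurd rfl hlm'
      · exact hp

/-! ### The statistic `N` -/

noncomputable def NS {m : ℕ} (x : NCMatching (2 * m) m) : ℕ :=
  ∑ p ∈ x.arcs, (p.2 - p.1)

lemma move_NS {m : ℕ} {u x : NCMatching (2 * m) m} (h : Move u x) : NS u < NS x := by
  obtain ⟨i, j, l, mm, w⟩ := move_inv h
  have h1 := w.hij; have h2 := w.hjl; have h3 := w.hlm
  have hE1 : ((l, mm) : ℕ × ℕ) ∈ u.arcs.erase (i, j) :=
    Finset.mem_erase.mpr ⟨by simp; omega, w.mem_lm⟩
  have hsum_u : NS u = (j - i) + ((mm - l) + ∑ p ∈ (u.arcs.erase (i, j)).erase (l, mm), (p.2 - p.1)) := by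
    unfold NS
    rw [← Finset.add_sum_erase _ _ w.mem_ij, ← Finset.add_sum_erase _ _ hE1]
  have hni : ((i, mm) : ℕ × ℕ) ∉ insert ((j : ℕ), l) ((u.arcs.erase (i, j)).erase (l, mm)) := by
    simp only [Finset.mem_insert]
    push_neg
    refine ⟨by simp; omega, fun hmem => w.nmem_im (Finset.mem_of_mem_erase (Finset.mem_of_mem_erase hmem))⟩
  have hnj : ((j : ℕ), l) ∉ (u.arcs.erase (i, j)).erase (l, mm) := by
    intro hmem
    exact w.nmem_jl (Finset.mem_of_mem_erase (Finset.mem_of_mem_erase hmem))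
  have hsum_x : NS x = (mm - i) + ((l - j) + ∑ p ∈ (u.arcs.erase (i, j)).erase (l, mm), (p.2 - p.1)) := by
    unfold NS
    rw [w.xeq, Finset.sum_insert hni, Finset.sum_insert hnj]
  omega

/-! ### Chains of moves -/

variable {m : ℕ}

inductive DownC : NCMatching (2 * m) m → NCMatching (2 * m) m → ℕ → Prop
  | refl (a) : DownC a a 0
  | cons {a y c p} : Move y a → DownC y c p → DownC a c (p + 1)

inductive UpC : NCMatching (2 * m) m → NCMatching (2 * m) m → ℕ → Prop
  | refl (a) : UpC a a 0
  | cons {a y b p} : Move a y → UpC y b p → UpC a b (p + 1)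

inductive W : NCMatching (2 * m) m → NCMatching (2 * m) m → ℕ → Prop
  | refl (a) : W a a 0
  | up {a y b p} : Move a y → W y b p → W a b (p + 1)
  | down {a y b p} : Move y a → W y b p → W a b (p + 1)

lemma UpC.append {a b c : NCMatching (2 * m) m} {p q : ℕ}
    (h1 : UpC a b p) (h2 : UpC b c q) : UpC a c (p + q) := by
  induction h1 with
  | refl => simpa using h2
  | cons hstep htail ih =>
    rw [Nat.add_right_comm]
    exact UpC.cons hstep (ih h2)

lemma DownC.append {a b c : NCMatching (2 * m) m} {p q : ℕ}
    (h1 : DownC a b p) (h2 : DownC b c q) : DownC a c (p + q) := by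
  induction h1 with
  | refl => simpa using h2
  | cons hstep htail ih =>
    rw [Nat.add_right_comm]
    exact DownC.cons hstep (ih h2)

lemma UpC.snoc {a b y : NCMatching (2 * m) m} {p : ℕ}
    (h1 : UpC a b p) (h2 : Move b y) : UpC a y (p + 1) :=
  h1.append (UpC.cons h2 (UpC.refl y))

lemma DownC.snoc {a c y : NCMatching (2 * m) m} {p : ℕ}
    (h1 : DownC a c p) (h2 : Move y c) : DownC a y (p + 1) :=
  h1.append (DownC.cons h2 (DownC.refl y))

lemma DownC.rev {a c : NCMatching (2 * m) m} {p : ℕ} (h : DownC a c p) : UpC c a p := by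
  induction h with
  | refl => exact UpC.refl _
  | cons hstep _ ih => exact ih.snoc hstep

lemma UpC.rtg {a b : NCMatching (2 * m) m} {p : ℕ} (h : UpC a b p) :
    Relation.ReflTransGen Move a b := by
  induction h with
  | refl => exact Relation.ReflTransGen.refl
  | cons hstep _ ih => exact Relation.ReflTransGen.head hstep ih

lemma W.append {a b c : NCMatching (2 * m) m} {p q : ℕ}
    (h1 : W a b p) (h2 : W b c q) : W a c (p + q) := by
  induction h1 with
  | refl => simpa using h2
  | up hstep htail ih =>
    rw [Nat.add_right_comm]
    exact W.up hstep (ih h2)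
  | down hstep htail ih =>
    rw [Nat.add_right_comm]
    exact W.down hstep (ih h2)

lemma DownC.toW {a c : NCMatching (2 * m) m} {p : ℕ} (h : DownC a c p) : W a c p := by
  induction h with
  | refl => exact W.refl _
  | cons hstep _ ih => exact W.down hstep ih

lemma UpC.toW {a b : NCMatching (2 * m) m} {p : ℕ} (h : UpC a b p) : W a b p := by
  induction h with
  | refl => exact W.refl _
  | cons hstep _ ih => exact W.up hstep ih

/-! ### Conversion between chains and `Fin`-indexed sequences -/

section FinSeq

variable {α : Type*} (R : α → α → Prop)

lemma cons_seq {d : ℕ} (a : α) (f : Fin (d + 1) → α)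
    (hstep : R a (f 0)) (hf : ∀ i : Fin d, R (f i.castSucc) (f i.succ)) :
    ∀ i : Fin (d + 1),
      R ((Fin.cases a f : Fin (d + 2) → α) i.castSucc)
        ((Fin.cases a f : Fin (d + 2) → α) i.succ) := by
  intro i
  induction i using Fin.cases with
  | zero =>
    simp only [Fin.castSucc_zero, Fin.cases_zero, Fin.cases_succ]; exact hstep
  | succ j =>
    rw [← Fin.succ_castSucc]
    simp only [Fin.cases_succ]
    exact hf j

lemma cons_seq_zero {d : ℕ} (a : α) (f : Fin (d + 1) → α) :
    (Fin.cases a f : Fin (d + 2) → α) 0 = a := rfl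

lemma cons_seq_last {d : ℕ} (a : α) (f : Fin (d + 1) → α) :
    (Fin.cases a f : Fin (d + 2) → α) (Fin.last (d + 1)) = f (Fin.last d) := by
  show Fin.cases a f (Fin.last d).succ = f (Fin.last d)
  rw [Fin.cases_succ]

lemma tail_seq {d : ℕ} (f : Fin (d + 2) → α)
    (hf : ∀ i : Fin (d + 1), R (f i.castSucc) (f i.succ)) :
    ∀ j : Fin d, R ((f ∘ Fin.succ) j.castSucc) ((f ∘ Fin.succ) j.succ) := by
  intro j
  have := hf j.succ
  rw [← Fin.succ_castSucc] at this
  exact this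

end FinSeq

lemma seq_of_UpC {a b : NCMatching (2 * m) m} {d : ℕ} (h : UpC a b d) :
    ∃ f : Fin (d + 1) → NCMatching (2 * m) m,
      f 0 = a ∧ f (Fin.last d) = b ∧ ∀ i : Fin d, Move (f i.castSucc) (f i.succ) := by
  induction h with
  | refl a => exact ⟨fun _ => a, rfl, rfl, fun i => i.elim0⟩
  | @cons a' y' b' p' hstep htail ih =>
    obtain ⟨f, hf0, hfl, hf⟩ := ih
    refine ⟨Fin.cases a' f, cons_seq_zero _ _, by rw [cons_seq_last]; exact hfl, ?_⟩
    exact cons_seq _ a' f (by rw [hf0]; exact hstep) hf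

lemma seq_of_DownC {a c : NCMatching (2 * m) m} {d : ℕ} (h : DownC a c d) :
    ∃ f : Fin (d + 1) → NCMatching (2 * m) m,
      f 0 = a ∧ f (Fin.last d) = c ∧ ∀ i : Fin d, Move (f i.succ) (f i.castSucc) := by
  induction h with
  | refl a => exact ⟨fun _ => a, rfl, rfl, fun i => i.elim0⟩
  | @cons a' y' b' p' hstep htail ih =>
    obtain ⟨f, hf0, hfl, hf⟩ := ih
    refine ⟨Fin.cases a' f, cons_seq_zero _ _, by rw [cons_seq_last]; exact hfl, ?_⟩
    exact cons_seq (fun u v => Move v u) a' f (by rw [hf0]; exact hstep) hf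

lemma seq_of_W {a b : NCMatching (2 * m) m} {d : ℕ} (h : W a b d) :
    ∃ f : Fin (d + 1) → NCMatching (2 * m) m,
      f 0 = a ∧ f (Fin.last d) = b ∧ IsMoveSeq f := by
  induction h with
  | refl a => exact ⟨fun _ => a, rfl, rfl, fun i => i.elim0⟩
  | @up a' y' b' p' hstep htail ih =>
    obtain ⟨f, hf0, hfl, hf⟩ := ih
    refine ⟨Fin.cases a' f, cons_seq_zero _ _, by rw [cons_seq_last]; exact hfl, ?_⟩
    exact cons_seq (fun u v => Move u v ∨ Move v u) a' f (by rw [hf0]; exact Or.inl hstep) hf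
  | @down a' y' b' p' hstep htail ih =>
    obtain ⟨f, hf0, hfl, hf⟩ := ih
    refine ⟨Fin.cases a' f, cons_seq_zero _ _, by rw [cons_seq_last]; exact hfl, ?_⟩
    exact cons_seq (fun u v => Move u v ∨ Move v u) a' f (by rw [hf0]; exact Or.inr hstep) hf

lemma W_of_seq : ∀ {d : ℕ} (f : Fin (d + 1) → NCMatching (2 * m) m),
    IsMoveSeq f → W (f 0) (f (Fin.last d)) d := by
  intro d
  induction d with
  | zero => intro f _; exact W.refl _
  | succ d ih =>
    intro f hf
    have hstep := hf 0
    have htail := ih (f ∘ Fin.succ) (tail_seq (fun u v => Move u v ∨ Move v u) f hf)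
    have h0 : (f ∘ Fin.succ) 0 = f 1 := rfl
    have hl : (f ∘ Fin.succ) (Fin.last d) = f (Fin.last (d + 1)) := by
      rw [Function.comp, Fin.succ_last]
    rw [h0, hl] at htail
    have hc : (0 : Fin (d + 1)).castSucc = 0 := rfl
    have hs : (0 : Fin (d + 1)).succ = 1 := rfl
    rw [hc, hs] at hstep
    rcases hstep with h | h
    · exact W.up h htail
    · exact W.down h htail

/-! ### mdist basics -/

lemma mdist_le {a b : NCMatching (2 * m) m} {d : ℕ} (h : W a b d) : mdist a b ≤ d := by
  obtain ⟨f, h0, hl, hseq⟩ := seq_of_W h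
  exact Nat.sInf_le ⟨f, h0, hl, hseq⟩

lemma W_mdist {a b : NCMatching (2 * m) m} (h : ∃ d, W a b d) : W a b (mdist a b) := by
  obtain ⟨d, hd⟩ := h
  have hne : {d : ℕ | ∃ f : Fin (d + 1) → NCMatching (2 * m) m,
      f 0 = a ∧ f (Fin.last d) = b ∧ IsMoveSeq f}.Nonempty := ⟨d, seq_of_W hd⟩
  obtain ⟨f, h0, hl, hseq⟩ := Nat.sInf_mem hne
  have := W_of_seq f hseq
  rwa [h0, hl] at this

/-! ### The bottom matching and connectivity -/

def botArcs (m : ℕ) : Finset (ℕ × ℕ) :=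
  (Finset.range m).image (fun i => (2 * i + 1, 2 * i + 2))

lemma mem_botArcs {m : ℕ} (p : ℕ × ℕ) :
    p ∈ botArcs m ↔ ∃ i < m, p = (2 * i + 1, 2 * i + 2) := by
  simp [botArcs, eq_comm]

def bot (m : ℕ) : NCMatching (2 * m) m where
  arcs := botArcs m
  card_arcs := by
    rw [botArcs, Finset.card_image_of_injective, Finset.card_range]
    intro i j hij
    simp at hij
    omega
  mem_range := by
    intro p hp
    rw [mem_botArcs] at hp
    obtain ⟨i, hi, rfl⟩ := hp
    simp; omega
  endpoints_distinct := by
    intro p hp q hq hpq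
    rw [mem_botArcs] at hp hq
    obtain ⟨i, hi, rfl⟩ := hp
    obtain ⟨j, hj, rfl⟩ := hq
    have : i ≠ j := by rintro rfl; exact hpq rfl
    simp; omega
  noncross := by
    intro p hp q hq
    rw [mem_botArcs] at hp hq
    obtain ⟨i, hi, rfl⟩ := hp
    obtain ⟨j, hj, rfl⟩ := hq
    simp
  no_ray_under := by
    intro p hp r h1 h2
    rw [mem_botArcs] at hp
    obtain ⟨i, hi, rfl⟩ := hp
    simp at h1 h2
    omega

lemma all_adjacent_eq_bot {x : NCMatching (2 * m) m}
    (h : ∀ p ∈ x.arcs, p.2 = p.1 + 1) : x = bot m := by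
  have key : ∀ i, i < m → (2 * i + 1, 2 * i + 2) ∈ x.arcs := by
    intro i
    induction i using Nat.strong_induction_on with
    | _ i ih =>
      intro hi
      obtain ⟨p, hp, hrp⟩ := coverage x (2 * i + 1) (by omega) (by omega)
      have hadj := h p hp
      have hr := x.mem_range p hp
      rcases hrp with h1 | h2
      · have : p = (2 * i + 1, 2 * i + 2) := by
          obtain ⟨p1, p2⟩ := p; simp at h1 hadj ⊢; omega
        rwa [← this]
      · -- p = (2i, 2i+1), contradiction with previous arc
        exfalso
        have hp1 : p.1 = 2 * i := by omega
        have hi1 : 1 ≤ i := by omega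
        have hprev := ih (i - 1) (by omega) (by omega)
        have heq : (2 * (i - 1) + 1, 2 * (i - 1) + 2) = p := by
          apply eq_of_shared x hprev hp
          right; right; left
          simp; omega
        have : 2 * (i - 1) + 1 = p.1 := by rw [← heq]
        omega
  apply ncm_ext
  have hsub : (bot m).arcs ⊆ x.arcs := by
    intro p hp
    rw [show (bot m).arcs = botArcs m from rfl, mem_botArcs] at hp
    obtain ⟨i, hi, rfl⟩ := hp
    exact key i hi
  symm
  apply Finset.eq_of_subset_of_card_le hsub
  rw [x.card_arcs, (bot m).card_arcs]

lemma down_step {x : NCMatching (2 * m) m} (h : x ≠ bot m) :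
    ∃ y, Move y x := by
  -- there is an arc that is not adjacent
  have hnadj : ∃ p ∈ x.arcs, p.2 ≠ p.1 + 1 := by
    by_contra hc
    push_neg at hc
    exact h (all_adjacent_eq_bot hc)
  obtain ⟨⟨p1, p2⟩, hp, hne⟩ := hnadj
  have hr := x.mem_range _ hp
  simp at hr
  -- find an arc strictly nested inside (p1,p2)
  have hnest : ∃ C ∈ x.arcs, p1 < C.1 ∧ C.2 < p2 := by
    obtain ⟨B, hB, hrB⟩ := coverage x (p1 + 1) (by omega) (by omega)
    have hBr := x.mem_range B hB
    have hBne : B ≠ (p1, p2) := by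
      rintro rfl
      simp at hrB
      omega
    have hd := x.endpoints_distinct B hB (p1, p2) hp hBne
    simp at hd
    have n1 := x.noncross (p1, p2) hp B hB
    have n2 := x.noncross B hB (p1, p2) hp
    simp at n1 n2
    refine ⟨B, hB, ?_⟩
    obtain ⟨b1, b2⟩ := B
    simp at hrB hd n1 n2 hBr ⊢
    omega
  obtain ⟨C0, hC0, hC0n⟩ := hnest
  -- take a maximal-span nested arc
  set T := x.arcs.filter (fun B => p1 < B.1 ∧ B.2 < p2) with hT
  have hTne : T.Nonempty := ⟨C0, Finset.mem_filter.mpr ⟨hC0, hC0n⟩⟩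
  obtain ⟨C, hCT, hCmax⟩ := Finset.exists_max_image T (fun B => B.2 - B.1) hTne
  rw [hT, Finset.mem_filter] at hCT
  obtain ⟨hCx, hC1, hC2⟩ := hCT
  have hCr := x.mem_range C hCx
  have hbet : ∀ q ∈ x.arcs, ¬ (p1 < q.1 ∧ q.1 < C.1 ∧ C.2 < q.2 ∧ q.2 < p2) := by
    rintro ⟨q1, q2⟩ hq ⟨hq1, hq2, hq3, hq4⟩
    have := hCmax (q1, q2) (by rw [hT, Finset.mem_filter]; exact ⟨hq, by simp; omega⟩)
    simp at this
    omega
  obtain ⟨u, hu, _⟩ := unnest x p1 C.1 C.2 p2 hC1 hCr.2.1 hC2 hp (by simpa using hCx) hbet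
  exact ⟨u, hu⟩

lemma to_bot (x : NCMatching (2 * m) m) : ∃ p, DownC x (bot m) p := by
  suffices h : ∀ n (x : NCMatching (2 * m) m), NS x ≤ n → ∃ p, DownC x (bot m) p by
    exact h (NS x) x le_rfl
  intro n
  induction n with
  | zero =>
    intro x hx
    by_cases hb : x = bot m
    · subst hb; exact ⟨0, DownC.refl _⟩
    · obtain ⟨y, hy⟩ := down_step hb
      have := move_NS hy
      omega
  | succ n ih =>
    intro x hx
    by_cases hb : x = bot m
    · subst hb; exact ⟨0, DownC.refl _⟩
    · obtain ⟨y, hy⟩ := down_step hb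
      have hN := move_NS hy
      obtain ⟨p, hp⟩ := ih y (by omega)
      exact ⟨p + 1, DownC.cons hy hp⟩

lemma conn (a b : NCMatching (2 * m) m) : ∃ d, W a b d := by
  obtain ⟨p, hp⟩ := to_bot a
  obtain ⟨q, hq⟩ := to_bot b
  exact ⟨p + q, hp.toW.append hq.rev.toW⟩

lemma mdist_triangle (a c b : NCMatching (2 * m) m) :
    mdist a b ≤ mdist a c + mdist c b :=
  mdist_le ((W_mdist (conn a c)).append (W_mdist (conn c b)))

/-! ### Membership characterizations from a move -/

lemma MW.mem_u {a x : NCMatching (2 * m) m} {i j l mm : ℕ} (w : MW a x i j l mm) :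
    ∀ p : ℕ × ℕ, p ∈ a.arcs ↔
      (p = (i, j) ∨ p = (l, mm) ∨ (p ≠ (j, l) ∧ p ≠ (i, mm) ∧ p ∈ x.arcs)) := by
  intro p
  rw [w.ueq]
  simp only [Finset.mem_insert, Finset.mem_erase, ne_eq]
  try tauto

/-! ### The peak lemma, disjoint case -/

lemma peak_disjoint {x a g : NCMatching (2 * m) m} {i1 j1 l1 m1 i2 j2 l2 m2 : ℕ}
    (w1 : MW a x i1 j1 l1 m1) (w2 : MW g x i2 j2 l2 m2)
    (hAA : ((i1, m1) : ℕ × ℕ) ≠ (i2, m2)) (hAB : ((i1, m1) : ℕ × ℕ) ≠ (j2, l2))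
    (hBA : ((j1, l1) : ℕ × ℕ) ≠ (i2, m2)) (hBB : ((j1, l1) : ℕ × ℕ) ≠ (j2, l2)) :
    ∃ t, Move t a ∧ Move t g := by
  have o1 := w1.hij; have o2 := w1.hjl; have o3 := w1.hlm
  have o4 := w2.hij; have o5 := w2.hjl; have o6 := w2.hlm
  have dAA := x.endpoints_distinct _ w1.mem_im _ w2.mem_im hAA
  have dAB := x.endpoints_distinct _ w1.mem_im _ w2.mem_jl hAB
  have dBA := x.endpoints_distinct _ w1.mem_jl _ w2.mem_im hBA
  have dBB := x.endpoints_distinct _ w1.mem_jl _ w2.mem_jl hBB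
  simp only [Prod.fst, Prod.snd] at dAA dAB dBA dBB
  obtain ⟨e1, e2, e3, e4⟩ := dAA
  obtain ⟨e5, e6, e7, e8⟩ := dAB
  obtain ⟨e9, e10, e11, e12⟩ := dBA
  obtain ⟨e13, e14, e15, e16⟩ := dBB
  have hA2a : ((i2, m2) : ℕ × ℕ) ∈ a.arcs := by
    rw [w1.mem_u]
    exact Or.inr (Or.inr ⟨by simp; omega, by simp; omega, w2.mem_im⟩)
  have hB2a : ((j2, l2) : ℕ × ℕ) ∈ a.arcs := by
    rw [w1.mem_u]
    exact Or.inr (Or.inr ⟨by simp; omega, by simp; omega, w2.mem_jl⟩)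
  have hbet_a : ∀ p ∈ a.arcs, ¬ (i2 < p.1 ∧ p.1 < j2 ∧ l2 < p.2 ∧ p.2 < m2) := by
    intro p hp
    rcases (w1.mem_u p).mp hp with rfl | rfl | ⟨hn1, hn2, hx⟩
    · rintro ⟨c1, c2, c3, c4⟩
      have n2 := x.noncross (i2, m2) w2.mem_im (i1, m1) w1.mem_im
      have hb := w2.between (i1, m1) w1.mem_im
      simp only [Prod.fst, Prod.snd] at n2 hb
      omega
    · rintro ⟨c1, c2, c3, c4⟩
      have n1 := x.noncross (i1, m1) w1.mem_im (i2, m2) w2.mem_im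
      have hb := w2.between (i1, m1) w1.mem_im
      simp only [Prod.fst, Prod.snd] at n1 hb
      omega
    · exact w2.between p hx
  obtain ⟨t, hta, ht⟩ := unnest a i2 j2 l2 m2 o4 o5 o6 hA2a hB2a hbet_a
  refine ⟨t, hta, ?_⟩
  rw [move_iff]
  have mem1 : ((i1, j1) : ℕ × ℕ) ∈ t.arcs := by
    rw [ht]
    simp only [Finset.mem_insert, Finset.mem_erase, ne_eq]
    exact Or.inr (Or.inr ⟨by simp; omega, by simp; omega, w1.mem_ij⟩)
  have mem2 : ((l1, m1) : ℕ × ℕ) ∈ t.arcs := by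
    rw [ht]
    simp only [Finset.mem_insert, Finset.mem_erase, ne_eq]
    exact Or.inr (Or.inr ⟨by simp; omega, by simp; omega, w1.mem_lm⟩)
  refine ⟨i1, j1, l1, m1, o1, o2, o3, mem1, mem2, ?_⟩
  ext p
  rw [w2.mem_u]
  simp only [Finset.mem_insert, Finset.mem_erase, ne_eq, ht]
  simp only [w1.mem_u p, Finset.mem_insert, Finset.mem_erase, ne_eq]
  constructor
  · rintro (rfl | rfl | ⟨h1, h2, hx⟩)
    · refine Or.inr (Or.inr ⟨by simp; omega, by simp; omega, Or.inl rfl⟩)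
    · refine Or.inr (Or.inr ⟨by simp; omega, by simp; omega, Or.inr (Or.inl rfl)⟩)
    · by_cases hc1 : p = (i1, m1)
      · exact Or.inl hc1
      by_cases hc2 : p = (j1, l1)
      · exact Or.inr (Or.inl hc2)
      refine Or.inr (Or.inr ⟨?_, ?_, Or.inr (Or.inr ⟨h1, h2, Or.inr (Or.inr ⟨hc2, hc1, hx⟩)⟩)⟩)
      · rintro rfl; exact w1.nmem_lm hx
      · rintro rfl; exact w1.nmem_ij hx
  · rintro (rfl | rfl | ⟨h1, h2, (rfl | rfl | ⟨h3, h4, (rfl | rfl | ⟨h5, h6, hx⟩)⟩)⟩)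
    · exact Or.inr (Or.inr ⟨by simp; omega, by simp; omega, w1.mem_im⟩)
    · exact Or.inr (Or.inr ⟨by simp; omega, by simp; omega, w1.mem_jl⟩)
    · exact Or.inl rfl
    · exact Or.inr (Or.inl rfl)
    · exact absurd rfl h2
    · exact absurd rfl h1
    · exact Or.inr (Or.inr ⟨h3, h4, hx⟩)

/-! ### The peak lemma, same-parent case -/

lemma peak_samepar {x a g : NCMatching (2 * m) m} {i j1 l1 j2 l2 mm : ℕ}
    (w1 : MW a x i j1 l1 mm) (w2 : MW g x i j2 l2 mm)
    (hBB : ((j1, l1) : ℕ × ℕ) ≠ (j2, l2)) :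
    ∃ t, Move t a ∧ Move t g := by
  have o1 := w1.hij; have o2 := w1.hjl; have o3 := w1.hlm
  have o4 := w2.hij; have o5 := w2.hjl; have o6 := w2.hlm
  have dBB := x.endpoints_distinct _ w1.mem_jl _ w2.mem_jl hBB
  have d1 := x.endpoints_distinct _ w1.mem_jl _ w1.mem_im (by simp; omega)
  have d2 := x.endpoints_distinct _ w2.mem_jl _ w2.mem_im (by simp; omega)
  simp only [Prod.fst, Prod.snd] at dBB d1 d2
  obtain ⟨e1, e2, e3, e4⟩ := dBB
  obtain ⟨f1, f2, f3, f4⟩ := d1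
  obtain ⟨f5, f6, f7, f8⟩ := d2
  have hdisj : l1 < j2 ∨ l2 < j1 := by
    have n1 := x.noncross _ w1.mem_jl _ w2.mem_jl
    have n2 := x.noncross _ w2.mem_jl _ w1.mem_jl
    have b1 := w1.between _ w2.mem_jl
    have b2 := w2.between _ w1.mem_jl
    simp only [Prod.fst, Prod.snd] at n1 n2 b1 b2
    omega
  have hB2a : ((j2, l2) : ℕ × ℕ) ∈ a.arcs := by
    rw [w1.mem_u]
    exact Or.inr (Or.inr ⟨by simp; omega, by simp; omega, w2.mem_jl⟩)
  rcases hdisj with hd | hd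
  · -- B1 left of B2 : un-nest ((l1,mm),(j2,l2)) in a
    have hbet_a : ∀ p ∈ a.arcs, ¬ (l1 < p.1 ∧ p.1 < j2 ∧ l2 < p.2 ∧ p.2 < mm) := by
      intro p hp
      rcases (w1.mem_u p).mp hp with rfl | rfl | ⟨hn1, hn2, hx⟩
      · simp only [Prod.fst, Prod.snd]; omega
      · simp only [Prod.fst, Prod.snd]; omega
      · have := w2.between p hx
        omega
    obtain ⟨t, hta, ht⟩ := unnest a l1 j2 l2 mm hd o5 (by omega) w1.mem_lm hB2a hbet_a
    refine ⟨t, hta, ?_⟩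
    rw [move_iff]
    have hnlj : ((l1, j2) : ℕ × ℕ) ∉ x.arcs := by
      intro h
      have := eq_of_shared x h w1.mem_jl (by simp)
      simp at this; omega
    have mem1 : ((i, j1) : ℕ × ℕ) ∈ t.arcs := by
      rw [ht]
      simp only [Finset.mem_insert, Finset.mem_erase, ne_eq]
      exact Or.inr (Or.inr ⟨by simp; omega, by simp; omega, w1.mem_ij⟩)
    have mem2 : ((l1, j2) : ℕ × ℕ) ∈ t.arcs := by rw [ht]; simp
    refine ⟨i, j1, l1, j2, o1, o2, hd, mem1, mem2, ?_⟩
    ext p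
    rw [w2.mem_u]
    simp only [Finset.mem_insert, Finset.mem_erase, ne_eq, ht]
    simp only [w1.mem_u p, Finset.mem_insert, Finset.mem_erase, ne_eq]
    constructor
    · rintro (rfl | rfl | ⟨h1, h2, hx⟩)
      · exact Or.inl rfl
      · refine Or.inr (Or.inr ⟨by simp; omega, by simp; omega, Or.inr (Or.inl rfl)⟩)
      · by_cases hc : p = (j1, l1)
        · exact Or.inr (Or.inl hc)
        refine Or.inr (Or.inr ⟨?_, ?_, Or.inr (Or.inr ⟨h1, ?_,
          Or.inr (Or.inr ⟨hc, h2, hx⟩)⟩)⟩)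
        · rintro rfl; exact hnlj hx
        · rintro rfl; exact w1.nmem_ij hx
        · rintro rfl; exact w1.nmem_lm hx
    · rintro (rfl | rfl | ⟨h1, h2, (rfl | rfl | ⟨h3, h4, (rfl | rfl | ⟨h5, h6, hx⟩)⟩)⟩)
      · exact Or.inl rfl
      · exact Or.inr (Or.inr ⟨hBB, by simp; omega, w1.mem_jl⟩)
      · exact absurd rfl h1
      · exact Or.inr (Or.inl rfl)
      · exact absurd rfl h2
      · exact absurd rfl h4
      · exact Or.inr (Or.inr ⟨h3, h6, hx⟩)
  · -- B2 left of B1 : un-nest ((i,j1),(j2,l2)) in a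
    have hbet_a : ∀ p ∈ a.arcs, ¬ (i < p.1 ∧ p.1 < j2 ∧ l2 < p.2 ∧ p.2 < j1) := by
      intro p hp
      rcases (w1.mem_u p).mp hp with rfl | rfl | ⟨hn1, hn2, hx⟩
      · simp only [Prod.fst, Prod.snd]; omega
      · simp only [Prod.fst, Prod.snd]; omega
      · have := w2.between p hx
        have hr := x.mem_range p hx
        omega
    obtain ⟨t, hta, ht⟩ := unnest a i j2 l2 j1 (by omega) o5 hd w1.mem_ij hB2a hbet_a
    refine ⟨t, hta, ?_⟩
    rw [move_iff]
    have hnlj : ((l2, j1) : ℕ × ℕ) ∉ x.arcs := by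
      intro h
      have := eq_of_shared x h w1.mem_jl (by simp)
      simp at this; omega
    have mem1 : ((l2, j1) : ℕ × ℕ) ∈ t.arcs := by
      rw [ht]; simp [Finset.mem_insert]
    have mem2 : ((l1, mm) : ℕ × ℕ) ∈ t.arcs := by
      rw [ht]
      simp only [Finset.mem_insert, Finset.mem_erase, ne_eq]
      exact Or.inr (Or.inr ⟨by simp; omega, by simp; omega, w1.mem_lm⟩)
    refine ⟨l2, j1, l1, mm, hd, o2, o3, mem1, mem2, ?_⟩
    ext p
    rw [w2.mem_u]
    simp only [Finset.mem_insert, Finset.mem_erase, ne_eq, ht]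
    simp only [w1.mem_u p, Finset.mem_insert, Finset.mem_erase, ne_eq]
    constructor
    · rintro (rfl | rfl | ⟨h1, h2, hx⟩)
      · refine Or.inr (Or.inr ⟨by simp; omega, by simp; omega, Or.inl rfl⟩)
      · exact Or.inl rfl
      · by_cases hc : p = (j1, l1)
        · exact Or.inr (Or.inl hc)
        refine Or.inr (Or.inr ⟨?_, ?_, Or.inr (Or.inr ⟨h1, ?_,
          Or.inr (Or.inr ⟨hc, h2, hx⟩)⟩)⟩)
        · rintro rfl; exact w1.nmem_lm hx
        · rintro rfl; exact hnlj hx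
        · rintro rfl; exact w1.nmem_ij hx
    · rintro (rfl | rfl | ⟨h1, h2, (rfl | rfl | ⟨h3, h4, (rfl | rfl | ⟨h5, h6, hx⟩)⟩)⟩)
      · exact Or.inr (Or.inl rfl)
      · exact Or.inr (Or.inr ⟨hBB, by simp; omega, w1.mem_jl⟩)
      · exact Or.inl rfl
      · exact absurd rfl h2
      · exact absurd rfl h4
      · exact absurd rfl h1
      · exact Or.inr (Or.inr ⟨h3, h6, hx⟩)

/-! ### The peak lemma, chain case: `B1 = A2` -/

lemma peak_chain {x a g : NCMatching (2 * m) m} {i1 j1 j2 l2 l1 m1 : ℕ}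
    (w1 : MW a x i1 j1 l1 m1) (w2 : MW g x j1 j2 l2 l1) :
    ∃ t, Move a t ∧ Move t g := by
  have o1 := w1.hij; have o2 := w1.hjl; have o3 := w1.hlm
  have o4 := w2.hij; have o5 := w2.hjl; have o6 := w2.hlm
  have d1 := x.endpoints_distinct _ w1.mem_jl _ w1.mem_im (by simp; omega)
  have d2 := x.endpoints_distinct _ w2.mem_jl _ w2.mem_im (by simp; omega)
  have d3 := x.endpoints_distinct _ w1.mem_im _ w2.mem_jl (by simp; omega)
  simp only [Prod.fst, Prod.snd] at d1 d2 d3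
  obtain ⟨f1, f2, f3, f4⟩ := d1
  obtain ⟨f5, f6, f7, f8⟩ := d2
  obtain ⟨f9, f10, f11, f12⟩ := d3
  have hnll : ((l2, l1) : ℕ × ℕ) ∉ x.arcs := by
    intro h
    have := eq_of_shared x h w1.mem_jl (by simp)
    simp at this; omega
  have hA1g : ((i1, m1) : ℕ × ℕ) ∈ g.arcs := by
    rw [w2.mem_u]
    exact Or.inr (Or.inr ⟨by simp; omega, by simp; omega, w1.mem_im⟩)
  have hbet_g : ∀ p ∈ g.arcs, ¬ (i1 < p.1 ∧ p.1 < l2 ∧ l1 < p.2 ∧ p.2 < m1) := by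
    intro p hp
    rcases (w2.mem_u p).mp hp with rfl | rfl | ⟨hn1, hn2, hx⟩
    · simp only [Prod.fst, Prod.snd]; omega
    · simp only [Prod.fst, Prod.snd]; omega
    · rintro ⟨c1, c2, c3, c4⟩
      obtain ⟨p1, p2⟩ := p
      have dp := x.endpoints_distinct _ hx _ w1.mem_jl hn2
      have b := w1.between _ hx
      have n := x.noncross _ w1.mem_jl _ hx
      simp only [Prod.fst, Prod.snd] at dp b n c1 c2 c3 c4
      omega
  obtain ⟨t, htg, ht⟩ := unnest g i1 l2 l1 m1 (by omega) o6 o3 hA1g w2.mem_lm hbet_g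
  refine ⟨t, ?_, htg⟩
  rw [move_iff]
  have hB2a : ((j2, l2) : ℕ × ℕ) ∈ a.arcs := by
    rw [w1.mem_u]
    exact Or.inr (Or.inr ⟨by simp; omega, by simp; omega, w2.mem_jl⟩)
  refine ⟨i1, j1, j2, l2, o1, o4, o5, w1.mem_ij, hB2a, ?_⟩
  ext p
  rw [show t.arcs = insert (i1, l2) (insert (l1, m1) ((g.arcs.erase (i1, m1)).erase (l2, l1)))
    from ht]
  simp only [Finset.mem_insert, Finset.mem_erase, ne_eq]
  simp only [w2.mem_u p, w1.mem_u p, Finset.mem_insert, Finset.mem_erase, ne_eq]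
  constructor
  · rintro (rfl | rfl | ⟨h1, h2, (rfl | rfl | ⟨h3, h4, hx⟩)⟩)
    · exact Or.inl rfl
    · refine Or.inr (Or.inr ⟨by simp; omega, by simp; omega, Or.inr (Or.inl rfl)⟩)
    · exact Or.inr (Or.inl rfl)
    · exact absurd rfl h1
    · refine Or.inr (Or.inr ⟨h3, ?_, Or.inr (Or.inr ⟨h4, h2, hx⟩)⟩)
      rintro rfl; exact w1.nmem_ij hx
  · rintro (rfl | rfl | ⟨h1, h2, (rfl | rfl | ⟨h3, h4, hx⟩)⟩)
    · exact Or.inl rfl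
    · refine Or.inr (Or.inr ⟨by simp; omega, by simp; omega, Or.inl rfl⟩)
    · exact absurd rfl h2
    · exact Or.inr (Or.inl rfl)
    · refine Or.inr (Or.inr ⟨?_, h4, Or.inr (Or.inr ⟨h1, h3, hx⟩)⟩)
      rintro rfl; exact hnll hx

/-- The peak-resolution lemma: any peak `a → x ← g` can be replaced by a valley-compatible
local configuration. -/
lemma peak {x a g : NCMatching (2 * m) m} (ha : Move a x) (hg : Move g x) :
    a = g ∨ (∃ t, Move t a ∧ Move t g) ∨ (∃ t, Move a t ∧ Move t g) ∨
      (∃ t, Move g t ∧ Move t a) := by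
  obtain ⟨i1, j1, l1, m1, w1⟩ := move_inv ha
  obtain ⟨i2, j2, l2, m2, w2⟩ := move_inv hg
  by_cases hBA : ((j1, l1) : ℕ × ℕ) = (i2, m2)
  · injection hBA with e1 e2
    subst e1; subst e2
    exact Or.inr (Or.inr (Or.inl (peak_chain w1 w2)))
  by_cases hAB : ((i1, m1) : ℕ × ℕ) = (j2, l2)
  · injection hAB with e1 e2
    subst e1; subst e2
    exact Or.inr (Or.inr (Or.inr (peak_chain w2 w1)))
  by_cases hAA : ((i1, m1) : ℕ × ℕ) = (i2, m2)
  · injection hAA with e1 e2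
    subst e1; subst e2
    by_cases hBB : ((j1, l1) : ℕ × ℕ) = (j2, l2)
    · injection hBB with e3 e4
      subst e3; subst e4
      left
      apply ncm_ext
      rw [w1.ueq, w2.ueq]
    · exact Or.inr (Or.inl (peak_samepar w1 w2 hBB))
  · by_cases hBB : ((j1, l1) : ℕ × ℕ) = (j2, l2)
    · exfalso
      injection hBB with e3 e4
      subst e3; subst e4
      have o1 := w1.hij; have o2 := w1.hjl; have o3 := w1.hlm
      have o4 := w2.hij; have o5 := w2.hjl; have o6 := w2.hlm
      have dAA := x.endpoints_distinct _ w1.mem_im _ w2.mem_im hAA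
      have n1 := x.noncross _ w1.mem_im _ w2.mem_im
      have n2 := x.noncross _ w2.mem_im _ w1.mem_im
      have b1 := w1.between _ w2.mem_im
      have b2 := w2.between _ w1.mem_im
      simp only [Prod.fst, Prod.snd] at dAA n1 n2 b1 b2
      omega
    · exact Or.inr (Or.inl (peak_disjoint w1 w2 hAA hAB hBA hBB))

/-- Pushing a single up-move below a descending chain. -/
lemma push : ∀ n : ℕ, ∀ (x a c : NCMatching (2 * m) m) (p : ℕ), NS x ≤ n → Move a x →
    DownC x c p → ∃ p' q' c', p' + q' ≤ p + 1 ∧ DownC a c' p' ∧ UpC c' c q' := by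
  intro n
  induction n using Nat.strong_induction_on with
  | _ n ih =>
    intro x a c p hN hax hxc
    cases hxc with
    | refl =>
      exact ⟨0, 1, a, by omega, DownC.refl a, UpC.cons hax (UpC.refl _)⟩
    | @cons _ g _ p0 hgx hgc =>
      have hNg : NS g < NS x := move_NS hgx
      rcases peak hax hgx with heq | ⟨t, hta, htg⟩ | ⟨t, hat, htg⟩ | ⟨t, hgt, hta⟩
      · subst heq
        exact ⟨p0, 0, c, by omega, hgc, UpC.refl _⟩
      · obtain ⟨p', q', c', hb, hd, hu⟩ :=
          ih (NS g) (by omega) g t c p0 le_rfl htg hgc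
        exact ⟨p' + 1, q', c', by omega, DownC.cons hta hd, hu⟩
      · obtain ⟨p1, q1, c1, hb1, hd1, hu1⟩ :=
          ih (NS g) (by omega) g t c p0 le_rfl htg hgc
        have hNt : NS t < NS g := move_NS htg
        obtain ⟨p2, q2, c2, hb2, hd2, hu2⟩ :=
          ih (NS t) (by omega) t a c1 p1 le_rfl hat hd1
        exact ⟨p2, q2 + q1, c2, by omega, hd2, hu2.append hu1⟩
      · exact ⟨p0 + 2, 0, c, by omega, DownC.cons hta (DownC.cons hgt hgc), UpC.refl _⟩

/-- Every walk can be rearranged into a valley of no greater length. -/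
lemma valley {a b : NCMatching (2 * m) m} {d : ℕ} (h : W a b d) :
    ∃ p q c, p + q ≤ d ∧ DownC a c p ∧ UpC c b q := by
  induction h with
  | refl a => exact ⟨0, 0, a, le_rfl, DownC.refl a, UpC.refl a⟩
  | @up a' y' b' d' hstep htail ih =>
    obtain ⟨p, q, c, hpq, hd, hu⟩ := ih
    obtain ⟨p', q', c', hb, hd', hu'⟩ := push (NS y') y' a' c p le_rfl hstep hd
    exact ⟨p', q' + q, c', by omega, hd', hu'.append hu⟩
  | @down a' y' b' d' hstep htail ih =>
    obtain ⟨p, q, c, hpq, hd, hu⟩ := ih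
    exact ⟨p + 1, q, c, by omega, DownC.cons hstep hd, hu⟩

end Valley

open Valley in
/-- For any two perfect noncrossing matchings `a`, `b` on `2m` points there is a matching
`c` with `d(a,b) = d(a,c) + d(c,b)`, `c ≼ a`, `c ≼ b`, and a minimal sequence from `a`
to `b` consisting of backward moves from `a` down to `c` followed by forward moves from
`c` up to `b`. -/
theorem exists_valley_matching (m : ℕ) (a b : NCMatching (2 * m) m) :
    ∃ c : NCMatching (2 * m) m,
      mdist a b = mdist a c + mdist c b ∧
      Relation.ReflTransGen Move c a ∧
      Relation.ReflTransGen Move c b ∧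
      (∃ f : Fin (mdist a c + 1) → NCMatching (2 * m) m,
        f 0 = a ∧ f (Fin.last (mdist a c)) = c ∧
        ∀ i : Fin (mdist a c), Move (f i.succ) (f i.castSucc)) ∧
      (∃ g : Fin (mdist c b + 1) → NCMatching (2 * m) m,
        g 0 = c ∧ g (Fin.last (mdist c b)) = b ∧
        ∀ i : Fin (mdist c b), Move (g i.castSucc) (g i.succ)) := by
  obtain ⟨p, q, c, hpq, hd, hu⟩ := valley (W_mdist (conn a b))
  have h1 : mdist a c ≤ p := mdist_le hd.toW
  have h2 : mdist c b ≤ q := mdist_le hu.toW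
  have h3 : mdist a b ≤ mdist a c + mdist c b := mdist_triangle a c b
  have hp : p = mdist a c := by omega
  have hq : q = mdist c b := by omega
  have hsum : mdist a b = mdist a c + mdist c b := by omega
  subst hp; subst hq
  exact ⟨c, hsum, hd.rev.rtg, hu.rtg, seq_of_DownC hd, seq_of_UpC hu⟩
end

section
/- If a, b are perfect noncrossing matchings on n points such that no pair of nested arcs of a lies on the same circle of aw(b), then every circle of aw(b) consists of arcs of a of the form (i_1,i_2),(i_3,i_4),…,(i_{t−1},i_t) with i_1<i_2<⋯<i_t (pairwise unnested), together with arcs (i_2,i_3),…,(i_{t−2},i_{t−1}),(i_1,i_t) of b; and there exists a minimal sequence from a to b consisting entirely of → moves. -/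
namespace NCM

variable {n k : ℕ}

/-- Two arcs sharing a vertex are equal. -/
lemma arc_unique (m : NCMatching n k) {p q : ℕ × ℕ} (hp : p ∈ m.arcs) (hq : q ∈ m.arcs)
    {c : ℕ} (hc : c = p.1 ∨ c = p.2) (hc' : c = q.1 ∨ c = q.2) : p = q := by
  by_contra hne
  obtain ⟨h1, h2, h3, h4⟩ := m.endpoints_distinct p hp q hq hne
  rcases hc with rfl | rfl <;> rcases hc' with h | h <;> omega

lemma ext_arcs {a b : NCMatching n k} (h : a.arcs = b.arcs) : a = b := by
  cases a; cases b; simp_all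

/-- laminar: if an endpoint of `t` is strictly inside `s`, `t` is strictly inside `s`. -/
lemma inside (m : NCMatching n k) {s t : ℕ × ℕ} (hs : s ∈ m.arcs) (ht : t ∈ m.arcs)
    (hne : t ≠ s) (h : (s.1 < t.1 ∧ t.1 < s.2) ∨ (s.1 < t.2 ∧ t.2 < s.2)) :
    s.1 < t.1 ∧ t.2 < s.2 := by
  obtain ⟨hs1, hs2, hs3⟩ := m.mem_range s hs
  obtain ⟨ht1, ht2, ht3⟩ := m.mem_range t ht
  obtain ⟨d1, d2, d3, d4⟩ := m.endpoints_distinct t ht s hs hne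
  have n1 := m.noncross s hs t ht
  have n2 := m.noncross t ht s hs
  omega

/-- every vertex in `[1, 2m]` is an endpoint of an arc of a perfect matching. -/
lemma covered {m : ℕ} (a : NCMatching (2 * m) m) {c : ℕ} (h1 : 1 ≤ c) (h2 : c ≤ 2 * m) :
    ∃ p ∈ a.arcs, c = p.1 ∨ c = p.2 := by
  classical
  set E : Finset ℕ := a.arcs.biUnion (fun p => {p.1, p.2}) with hE
  have hcard : E.card = 2 * m := by
    rw [hE, Finset.card_biUnion]
    · rw [Finset.sum_congr rfl (g := fun _ => 2)]
      · simp [Finset.sum_const, ← a.card_arcs, mul_comm]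
      · intro p hp
        have := (a.mem_range p hp).2.1
        rw [Finset.card_insert_of_notMem (by simp; omega), Finset.card_singleton]
    · intro p hp q hq hne
      obtain ⟨e1, e2, e3, e4⟩ := a.endpoints_distinct p hp q hq hne
      simp only [Finset.disjoint_insert_left, Finset.disjoint_singleton_left,
        Finset.mem_insert, Finset.mem_singleton]
      constructor <;> simp_all
  have hsub : E ⊆ Finset.Icc 1 (2 * m) := by
    intro x hx
    simp only [hE, Finset.mem_biUnion, Finset.mem_insert, Finset.mem_singleton] at hx
    obtain ⟨p, hp, hx⟩ := hx
    have := a.mem_range p hp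
    simp only [Finset.mem_Icc]
    omega
  have : E = Finset.Icc 1 (2 * m) := by
    apply Finset.eq_of_subset_of_card_le hsub
    rw [hcard, Nat.card_Icc]
    omega
  have hc : c ∈ E := by rw [this]; simp only [Finset.mem_Icc]; omega
  simp only [hE, Finset.mem_biUnion, Finset.mem_insert, Finset.mem_singleton] at hc
  obtain ⟨p, hp, hc⟩ := hc
  exact ⟨p, hp, hc⟩

/-- a perfect matching has no rays. -/
lemma no_ray {m : ℕ} (a : NCMatching (2 * m) m) (i : ℕ)
    (hi : 1 ≤ i ∧ i ≤ 2 * m ∧ ∀ p ∈ a.arcs, p.1 ≠ i ∧ p.2 ≠ i) : False := by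
  obtain ⟨h1, h2, h3⟩ := hi
  obtain ⟨p, hp, hc⟩ := covered a h1 h2
  have := h3 p hp
  omega

end NCM

open Relation

namespace NCM
section QuotCard
variable {α : Type*} {r s : α → α → Prop}

lemma eqvGen_mono (h : ∀ x y, r x y → EqvGen s x y) {x y : α} (hxy : EqvGen r x y) :
    EqvGen s x y := by
  induction hxy with
  | rel a b hr => exact h a b hr
  | refl a => exact EqvGen.refl a
  | symm a b _ ih => exact EqvGen.symm _ _ ih
  | trans a b c _ _ ih1 ih2 => exact EqvGen.trans _ _ _ ih1 ih2

noncomputable def quotMap (r s : α → α → Prop) (h : ∀ x y, r x y → EqvGen s x y) :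
    Quot r → Quot s :=
  Quot.lift (Quot.mk s) (fun a b hab => Quot.eqvGen_sound (h a b hab))

lemma quotMap_mk (h : ∀ x y, r x y → EqvGen s x y) (x : α) :
    quotMap r s h (Quot.mk r x) = Quot.mk s x := rfl

lemma quotMap_surj (h : ∀ x y, r x y → EqvGen s x y) :
    Function.Surjective (quotMap r s h) := by
  intro q
  obtain ⟨x⟩ := q
  exact ⟨Quot.mk r x, rfl⟩

lemma card_quot_le [Finite α] (h : ∀ x y, r x y → EqvGen s x y) :
    Nat.card (Quot s) ≤ Nat.card (Quot r) :=
  Nat.card_le_card_of_surjective _ (quotMap_surj h)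

lemma card_quot_eq [Finite α] (h1 : ∀ x y, r x y → EqvGen s x y)
    (h2 : ∀ x y, s x y → EqvGen r x y) :
    Nat.card (Quot r) = Nat.card (Quot s) :=
  le_antisymm (card_quot_le h2) (card_quot_le h1)

lemma card_succ_le_of_surj_collision [Finite α] {β : Type*} (f : α → β)
    (hf : Function.Surjective f) {a1 a2 : α} (hne : a1 ≠ a2) (heq : f a1 = f a2) :
    Nat.card β + 1 ≤ Nat.card α := by
  classical
  have hsurj : Function.Surjective (fun x : {a : α // a ≠ a2} => f x.1) := by
    intro b
    obtain ⟨a, rfl⟩ := hf b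
    by_cases h : a = a2
    · subst h; exact ⟨⟨a1, hne⟩, heq⟩
    · exact ⟨⟨a, h⟩, rfl⟩
  have h1 : Nat.card β ≤ Nat.card {a : α // a ≠ a2} :=
    Nat.card_le_card_of_surjective _ hsurj
  have hu : Nat.card {a : α // a = a2} = 1 := by
    have : Unique {a : α // a = a2} := ⟨⟨⟨a2, rfl⟩⟩, by rintro ⟨x, rfl⟩; rfl⟩
    exact Nat.card_unique
  have h2 : Nat.card α = 1 + Nat.card {a : α // a ≠ a2} := by
    calc Nat.card α = Nat.card ({a : α // a = a2} ⊕ {a : α // ¬ a = a2}) :=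
          (Nat.card_congr (Equiv.sumCompl (fun a => a = a2))).symm
      _ = 1 + Nat.card {a : α // a ≠ a2} := by rw [Nat.card_sum, hu]
  omega

def oneEdge (r : α → α → Prop) (u w : α) : α → α → Prop :=
  fun x y => r x y ∨ (x = u ∧ y = w)

lemma eqvGen_oneEdge_decomp {u w x y : α} (hxy : EqvGen (oneEdge r u w) x y) :
    EqvGen r x y ∨ (EqvGen r x u ∧ EqvGen r w y) ∨ (EqvGen r x w ∧ EqvGen r u y) := by
  induction hxy with
  | rel a b hr =>
    rcases hr with hr | ⟨rfl, rfl⟩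
    · exact Or.inl (EqvGen.rel _ _ hr)
    · exact Or.inr (Or.inl ⟨EqvGen.refl _, EqvGen.refl _⟩)
  | refl a => exact Or.inl (EqvGen.refl a)
  | symm a b _ ih =>
    rcases ih with h | ⟨h1, h2⟩ | ⟨h1, h2⟩
    · exact Or.inl (EqvGen.symm _ _ h)
    · exact Or.inr (Or.inr ⟨EqvGen.symm _ _ h2, EqvGen.symm _ _ h1⟩)
    · exact Or.inr (Or.inl ⟨EqvGen.symm _ _ h2, EqvGen.symm _ _ h1⟩)
  | trans a b c _ _ ih1 ih2 =>
    rcases ih1 with h | ⟨h1, h2⟩ | ⟨h1, h2⟩ <;>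
      rcases ih2 with h' | ⟨h1', h2'⟩ | ⟨h1', h2'⟩
    · exact Or.inl (EqvGen.trans _ _ _ h h')
    · exact Or.inr (Or.inl ⟨EqvGen.trans _ _ _ h h1', h2'⟩)
    · exact Or.inr (Or.inr ⟨EqvGen.trans _ _ _ h h1', h2'⟩)
    · exact Or.inr (Or.inl ⟨h1, EqvGen.trans _ _ _ h2 h'⟩)
    · refine Or.inl ?_
      have huw : EqvGen r u w :=
        EqvGen.symm _ _ (EqvGen.trans _ _ _ h2 h1')
      exact EqvGen.trans _ _ _ h1 (EqvGen.trans _ _ _ huw h2')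
    · exact Or.inl (EqvGen.trans _ _ _ h1 h2')
    · exact Or.inr (Or.inr ⟨h1, EqvGen.trans _ _ _ h2 h'⟩)
    · exact Or.inl (EqvGen.trans _ _ _ h1 h2')
    · refine Or.inl ?_
      have hwu : EqvGen r w u := EqvGen.symm _ _ (EqvGen.trans _ _ _ h2 h1')
      exact EqvGen.trans _ _ _ h1 (EqvGen.trans _ _ _ hwu h2')

lemma card_quot_oneEdge_le [Finite α] (u w : α) :
    Nat.card (Quot r) ≤ Nat.card (Quot (oneEdge r u w)) + 1 := by
  classical
  have hrs : ∀ x y, r x y → EqvGen (oneEdge r u w) x y :=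
    fun x y h => EqvGen.rel _ _ (Or.inl h)
  set φ := quotMap r (oneEdge r u w) hrs with hφ
  set f : Quot r → Option (Quot (oneEdge r u w)) := fun q =>
    if Quot.mk r u ≠ Quot.mk r w ∧ q = Quot.mk r w then none
    else some (φ q) with hf
  have hinj : Function.Injective f := by
    intro q1 q2 hq
    obtain ⟨x⟩ := q1
    obtain ⟨y⟩ := q2
    by_cases c1 : Quot.mk r u ≠ Quot.mk r w ∧ Quot.mk r x = Quot.mk r w <;>
      by_cases c2 : Quot.mk r u ≠ Quot.mk r w ∧ Quot.mk r y = Quot.mk r w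
    · exact c1.2.trans c2.2.symm
    · simp only [hf, if_pos c1, if_neg c2] at hq; exact absurd hq (by simp)
    · simp only [hf, if_neg c1, if_pos c2] at hq; exact absurd hq (by simp)
    · simp only [hf, if_neg c1, if_neg c2, Option.some.injEq] at hq
      rw [hφ, quotMap_mk, quotMap_mk] at hq
      have hd := Quot.eqvGen_exact hq
      rcases eqvGen_oneEdge_decomp hd with h | ⟨hA, hB⟩ | ⟨hA, hB⟩
      · exact Quot.eqvGen_sound h
      · have hyw : Quot.mk r y = Quot.mk r w := Quot.eqvGen_sound (EqvGen.symm _ _ hB)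
        have huw : Quot.mk r u = Quot.mk r w := by
          by_contra hne; exact c2 ⟨hne, hyw⟩
        calc Quot.mk r x = Quot.mk r u := Quot.eqvGen_sound hA
          _ = Quot.mk r w := huw
          _ = Quot.mk r y := hyw.symm
      · have hxw : Quot.mk r x = Quot.mk r w := Quot.eqvGen_sound hA
        have huw : Quot.mk r u = Quot.mk r w := by
          by_contra hne; exact c1 ⟨hne, hxw⟩
        calc Quot.mk r x = Quot.mk r w := hxw
          _ = Quot.mk r u := huw.symm
          _ = Quot.mk r y := Quot.eqvGen_sound hB
  have hft : Fintype (Quot (oneEdge r u w)) := Fintype.ofFinite _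
  calc Nat.card (Quot r) ≤ Nat.card (Option (Quot (oneEdge r u w))) :=
        Nat.card_le_card_of_injective f hinj
    _ = Nat.card (Quot (oneEdge r u w)) + 1 := by
        rw [Nat.card_eq_fintype_card, Nat.card_eq_fintype_card, Fintype.card_option]

lemma card_quot_oneEdge_eq [Finite α] {u w : α} (hnc : ¬ EqvGen r u w) :
    Nat.card (Quot r) = Nat.card (Quot (oneEdge r u w)) + 1 := by
  refine le_antisymm (card_quot_oneEdge_le u w) ?_
  have hrs : ∀ x y, r x y → EqvGen (oneEdge r u w) x y :=
    fun x y h => EqvGen.rel _ _ (Or.inl h)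
  refine card_succ_le_of_surj_collision (quotMap r (oneEdge r u w) hrs) (quotMap_surj hrs)
    (a1 := Quot.mk r u) (a2 := Quot.mk r w) ?_ ?_
  · intro hc
    exact hnc (Quot.eqvGen_exact hc)
  · rw [quotMap_mk, quotMap_mk]
    exact Quot.eqvGen_sound (EqvGen.rel _ _ (Or.inr ⟨rfl, rfl⟩))

def symEdge (r : α → α → Prop) (u w : α) : α → α → Prop :=
  fun x y => r x y ∨ (x = u ∧ y = w) ∨ (x = w ∧ y = u)

lemma card_quot_symEdge_eq_oneEdge [Finite α] (u w : α) :
    Nat.card (Quot (symEdge r u w)) = Nat.card (Quot (oneEdge r u w)) := by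
  refine card_quot_eq ?_ ?_
  · rintro x y (h | ⟨rfl, rfl⟩ | ⟨rfl, rfl⟩)
    · exact EqvGen.rel _ _ (Or.inl h)
    · exact EqvGen.rel _ _ (Or.inr ⟨rfl, rfl⟩)
    · exact EqvGen.symm _ _ (EqvGen.rel _ _ (Or.inr ⟨rfl, rfl⟩))
  · rintro x y (h | ⟨rfl, rfl⟩)
    · exact EqvGen.rel _ _ (Or.inl h)
    · exact EqvGen.rel _ _ (Or.inr (Or.inl ⟨rfl, rfl⟩))

lemma eqvGen_symEdge_decomp {u w x y : α} (hxy : EqvGen (symEdge r u w) x y) :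
    EqvGen r x y ∨ (EqvGen r x u ∧ EqvGen r w y) ∨ (EqvGen r x w ∧ EqvGen r u y) := by
  have h1 : EqvGen (oneEdge r u w) x y := by
    refine eqvGen_mono ?_ hxy
    rintro p q (h | ⟨rfl, rfl⟩ | ⟨rfl, rfl⟩)
    · exact EqvGen.rel _ _ (Or.inl h)
    · exact EqvGen.rel _ _ (Or.inr ⟨rfl, rfl⟩)
    · exact EqvGen.symm _ _ (EqvGen.rel _ _ (Or.inr ⟨rfl, rfl⟩))
  exact eqvGen_oneEdge_decomp h1

lemma card_quot_symEdge_eq [Finite α] {u w : α} (hnc : ¬ EqvGen r u w) :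
    Nat.card (Quot r) = Nat.card (Quot (symEdge r u w)) + 1 := by
  rw [card_quot_symEdge_eq_oneEdge]
  exact card_quot_oneEdge_eq hnc

lemma card_quot_symEdge_le [Finite α] (u w : α) :
    Nat.card (Quot r) ≤ Nat.card (Quot (symEdge r u w)) + 1 := by
  rw [card_quot_symEdge_eq_oneEdge]
  exact card_quot_oneEdge_le u w

end QuotCard
end NCM


open Relation
namespace NCM

variable {n k : ℕ}

lemma glueRel_symm (a b : NCMatching n k) {i j : ℕ} (h : glueRel a b i j) : glueRel a b j i := by
  unfold glueRel at *; tauto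

lemma conn_symm (a b : NCMatching n k) {i j : ℕ} (h : Conn a b i j) : Conn a b j i :=
  (@ReflTransGen.stdSymm _ _ ⟨fun _ _ hh => glueRel_symm a b hh⟩).symm _ _ h

lemma conn_trans (a b : NCMatching n k) {i j l : ℕ} (h : Conn a b i j) (h' : Conn a b j l) :
    Conn a b i l := ReflTransGen.trans h h'

lemma glueRel_range (a b : NCMatching n k) {i j : ℕ} (h : glueRel a b i j) :
    1 ≤ i ∧ i ≤ n ∧ 1 ≤ j ∧ j ≤ n := by
  rcases h with h | h | h | h
  · have := a.mem_range _ h; simp at this ⊢; omega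
  · have := a.mem_range _ h; simp at this ⊢; omega
  · have := b.mem_range _ h; simp at this ⊢; omega
  · have := b.mem_range _ h; simp at this ⊢; omega

/-- components are closed under closed vertex-predicates -/
lemma conn_closed (a b : NCMatching n k) {S : ℕ → Prop}
    (hS : ∀ w v, S w → glueRel a b w v → S v) {u v : ℕ} (hu : S u) (hc : Conn a b u v) :
    S v := by
  induction hc with
  | refl => exact hu
  | tail _ hstep ih => exact hS _ _ ih hstep

/-- arcs at a vertex are unique; the component of a shared arc is the pair. -/
lemma conn_of_glue (a b : NCMatching n k) {i j : ℕ} (h : glueRel a b i j) : Conn a b i j :=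
  ReflTransGen.single h

/-- bridge: `Conn` on labels vs `EqvGen (glueRelF)` on `Fin n`. -/
lemma conn_to_eqvGen (a b : NCMatching n k) {c d : ℕ} (h : Conn a b c d) :
    c = d ∨ (1 ≤ c ∧ c ≤ n ∧ 1 ≤ d ∧ d ≤ n ∧
      ∀ (hc : c - 1 < n) (hd : d - 1 < n),
        EqvGen (glueRelF a b) ⟨c - 1, hc⟩ ⟨d - 1, hd⟩) := by
  induction h with
  | refl => exact Or.inl rfl
  | tail _ hstep ih =>
    rename_i e f _
    have hr := glueRel_range a b hstep
    right
    refine ⟨?_, ?_, ?_, ?_, ?_⟩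
    · rcases ih with rfl | ih; omega; omega
    · rcases ih with rfl | ih; omega; omega
    · omega
    · omega
    · intro hc hd
      have hedge : glueRelF a b ⟨e - 1, by omega⟩ ⟨f - 1, hd⟩ := by
        unfold glueRelF
        simp only
        have h1 : e - 1 + 1 = e := by omega
        have h2 : f - 1 + 1 = f := by omega
        rw [h1, h2]; exact hstep
      rcases ih with rfl | ih
      · exact EqvGen.rel _ _ hedge
      · exact EqvGen.trans _ _ _ (ih.2.2.2.2 hc (by omega)) (EqvGen.rel _ _ hedge)

lemma conn_to_eqvGen' (a b : NCMatching n k) {c d : ℕ} (h : Conn a b c d)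
    (hc : c - 1 < n) (hd : d - 1 < n) (hcd : c = d ∨ (1 ≤ c ∧ 1 ≤ d)) :
    EqvGen (glueRelF a b) ⟨c - 1, hc⟩ ⟨d - 1, hd⟩ := by
  rcases conn_to_eqvGen a b h with rfl | ⟨_, _, _, _, hE⟩
  · exact EqvGen.refl _
  · exact hE hc hd

lemma eqvGen_to_conn (a b : NCMatching n k) {u v : Fin n}
    (h : EqvGen (glueRelF a b) u v) : Conn a b ((u : ℕ) + 1) ((v : ℕ) + 1) := by
  induction h with
  | rel x y hr => exact ReflTransGen.single hr
  | refl x => exact ReflTransGen.refl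
  | symm x y _ ih => exact conn_symm a b ih
  | trans x y z _ _ ih1 ih2 => exact conn_trans a b ih1 ih2

lemma conn_of_mem_arcs_a (a b : NCMatching n k) {p : ℕ × ℕ} (hp : p ∈ a.arcs) :
    Conn a b p.1 p.2 := ReflTransGen.single (Or.inl (by simpa using hp))

lemma conn_of_mem_arcs_b (a b : NCMatching n k) {p : ℕ × ℕ} (hp : p ∈ b.arcs) :
    Conn a b p.1 p.2 := ReflTransGen.single (Or.inr (Or.inr (Or.inl (by simpa using hp))))

section Comps
variable {m : ℕ} (a b : NCMatching (2 * m) m)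

lemma card_arcs_nat : Nat.card ↥(a.arcs) = m := by
  simp [Nat.card_eq_fintype_card, Fintype.card_coe, a.card_arcs]

/-- the canonical surjection from arcs to components -/
noncomputable def arcToComp : ↥(a.arcs) → Quot (glueRelF a b) :=
  fun p => Quot.mk _ ⟨p.1.1 - 1, by
    have := a.mem_range p.1 p.2; omega⟩

lemma arcToComp_surj : Function.Surjective (arcToComp a b) := by
  intro q
  obtain ⟨u⟩ := q
  have hu1 : 1 ≤ (u : ℕ) + 1 := by omega
  have hu2 : (u : ℕ) + 1 ≤ 2 * m := by omega
  obtain ⟨p, hp, hc⟩ := covered a hu1 hu2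
  refine ⟨⟨p, hp⟩, ?_⟩
  unfold arcToComp
  have hr := a.mem_range p hp
  rcases hc with hc | hc
  · congr 1; ext; simp; omega
  · apply Quot.sound
    unfold glueRelF
    have h1 : p.1 - 1 + 1 = p.1 := by omega
    simp only [h1]
    have h2 : (u : ℕ) + 1 = p.2 := by omega
    rw [h2]
    exact Or.inl (by simpa using hp)

lemma comps_le : comps a b ≤ m := by
  calc comps a b ≤ Nat.card ↥(a.arcs) :=
        Nat.card_le_card_of_surjective _ (arcToComp_surj a b)
    _ = m := card_arcs_nat a

/-- in `b w(b)` the component of an endpoint of `p` is `{p.1, p.2}`. -/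
lemma conn_self_pair {p : ℕ × ℕ} (hp : p ∈ b.arcs) {v : ℕ} (hc : Conn b b p.1 v) :
    v = p.1 ∨ v = p.2 := by
  refine conn_closed b b (S := fun v => v = p.1 ∨ v = p.2) ?_ (Or.inl rfl) hc
  intro w v hw hg
  have : ∃ e ∈ b.arcs, (w = e.1 ∧ v = e.2) ∨ (w = e.2 ∧ v = e.1) := by
    rcases hg with h | h | h | h
    · exact ⟨_, h, Or.inl ⟨rfl, rfl⟩⟩
    · exact ⟨_, h, Or.inr ⟨rfl, rfl⟩⟩
    · exact ⟨_, h, Or.inl ⟨rfl, rfl⟩⟩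
    · exact ⟨_, h, Or.inr ⟨rfl, rfl⟩⟩
  obtain ⟨e, he, hcase⟩ := this
  have hep : e = p := arc_unique b he hp (c := w) (by tauto) hw
  subst hep
  rcases hcase with ⟨_, h2⟩ | ⟨_, h2⟩
  exacts [Or.inr h2, Or.inl h2]

lemma arcToComp_inj_self : Function.Injective (arcToComp b b) := by
  intro p q hpq
  unfold arcToComp at hpq
  have hd := Quot.eqvGen_exact hpq
  have hconn := eqvGen_to_conn b b hd
  have hrp := b.mem_range p.1 p.2
  have hrq := b.mem_range q.1 q.2
  have h1 : (p.1.1 : ℕ) - 1 + 1 = p.1.1 := by omega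
  have h2 : (q.1.1 : ℕ) - 1 + 1 = q.1.1 := by omega
  simp only [h1, h2] at hconn
  have := conn_self_pair b p.2 hconn
  exact Subtype.ext (arc_unique b q.2 p.2 (Or.inl rfl) (by tauto)).symm

lemma comps_self : comps b b = m := by
  refine le_antisymm (comps_le b b) ?_
  have h := Nat.card_le_card_of_injective _ (arcToComp_inj_self b)
  rwa [card_arcs_nat] at h

lemma arcs_eq_of_comps_eq (hc : comps a b = m) : a.arcs = b.arcs := by
  classical
  -- the surjection arcToComp a b is bijective
  have hft : Fintype (Quot (glueRelF a b)) := Fintype.ofFinite _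
  have hcards : Fintype.card ↥(a.arcs) = Fintype.card (Quot (glueRelF a b)) := by
    have h1 : Nat.card ↥(a.arcs) = m := card_arcs_nat a
    have h2 : Nat.card (Quot (glueRelF a b)) = m := hc
    rw [Nat.card_eq_fintype_card] at h1 h2
    omega
  have hbij : Function.Bijective (arcToComp a b) :=
    (Fintype.bijective_iff_surjective_and_card _).2 ⟨arcToComp_surj a b, hcards⟩
  -- hence distinct arcs lie on distinct components
  apply Finset.eq_of_subset_of_card_le ?_ (by rw [a.card_arcs, b.card_arcs])
  intro p hp
  -- the b-arc at p.1 must join p.1 to p.2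
  have hrp := a.mem_range p hp
  obtain ⟨e, he, hce⟩ := covered b (by omega) (by omega : p.1 ≤ 2 * m)
  -- the other endpoint of e
  have hre := b.mem_range e he
  set u : ℕ := if p.1 = e.1 then e.2 else e.1 with hu
  have hgl : glueRel a b p.1 u := by
    rcases hce with hce | hce
    · rw [hu, if_pos hce]
      right; right; left
      rw [hce]
      simpa using he
    · rw [hu, if_neg (by omega)]
      right; right; right
      rw [hce]
      simpa using he
  have hune : u ≠ p.1 := by
    rcases hce with hce | hce
    · rw [hu, if_pos hce]; omega
    · rw [hu, if_neg (by omega)]; omega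
  -- u is endpoint of an a-arc q
  have hu1 : 1 ≤ u := by simp only [hu]; split <;> omega
  have hu2 : u ≤ 2 * m := by simp only [hu]; split <;> omega
  obtain ⟨q, hq, hcq⟩ := covered a hu1 hu2
  have hrq := a.mem_range q hq
  -- components of p and q agree
  have hpq : arcToComp a b ⟨p, hp⟩ = arcToComp a b ⟨q, hq⟩ := by
    unfold arcToComp
    apply Quot.eqvGen_sound
    have hcpq : Conn a b p.1 q.1 := by
      refine conn_trans a b (ReflTransGen.single hgl) ?_
      rcases hcq with hcq | hcq
      · rw [hcq]; exact ReflTransGen.refl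
      · rw [hcq]
        exact conn_symm a b (conn_of_mem_arcs_a a b hq)
    exact conn_to_eqvGen' a b hcpq (by omega) (by omega) (Or.inr ⟨by omega, by omega⟩)
  have : p = q := by
    have := hbij.1 hpq
    simpa using this
  subst this
  -- so u ∈ {p.1, p.2}, u ≠ p.1, hence u = p.2 and e = p
  have hup2 : u = p.2 := by rcases hcq with h | h <;> omega
  have hep : e = p := by
    rcases hce with hcase | hcase
    · have hu2' : u = e.2 := by rw [hu, if_pos hcase]
      have h1 : e = (e.1, e.2) := rfl
      have h2 : p = (p.1, p.2) := rfl
      rw [h1, h2, Prod.mk.injEq]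
      omega
    · exfalso
      have hne1 : p.1 ≠ e.1 := by omega
      have hu2' : u = e.1 := by rw [hu, if_neg hne1]
      omega
  rwa [← hep]

end Comps

section MoveComps
variable {m : ℕ}

/-- the two weaves differ by resmoothing at four points: the saturated quotients agree. -/
lemma move_quot_card_eq (u v b : NCMatching (2 * m) m) {i j l mm : ℕ}
    (I J L MM : Fin (2 * m))
    (hI : (I : ℕ) + 1 = i) (hJ : (J : ℕ) + 1 = j) (hL : (L : ℕ) + 1 = l)
    (hMM : (MM : ℕ) + 1 = mm)
    (hij : (i, j) ∈ u.arcs) (hlm : (l, mm) ∈ u.arcs)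
    (him' : (i, mm) ∈ v.arcs) (hjl' : (j, l) ∈ v.arcs)
    (hcommon : ∀ t, t ∈ u.arcs → t ≠ (i, j) → t ≠ (l, mm) → t ∈ v.arcs)
    (hcommon' : ∀ t, t ∈ v.arcs → t ≠ (i, mm) → t ≠ (j, l) → t ∈ u.arcs) :
    Nat.card (Quot (symEdge (glueRelF u b) I MM)) =
      Nat.card (Quot (symEdge (glueRelF v b) I J)) := by
  set r := glueRelF u b with hr
  set r' := glueRelF v b with hr'
  set s := symEdge r I MM with hs
  set s' := symEdge r' I J with hs'
  have edgeIJ : EqvGen s' I J := EqvGen.rel _ _ (Or.inr (Or.inl ⟨rfl, rfl⟩))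
  have edgeIM : EqvGen s I MM := EqvGen.rel _ _ (Or.inr (Or.inl ⟨rfl, rfl⟩))
  have rIM : EqvGen s' I MM := by
    refine EqvGen.rel _ _ (Or.inl ?_)
    show glueRel v b ((I : ℕ) + 1) ((MM : ℕ) + 1)
    rw [hI, hMM]; exact Or.inl him'
  have rJL : EqvGen s' J L := by
    refine EqvGen.rel _ _ (Or.inl ?_)
    show glueRel v b ((J : ℕ) + 1) ((L : ℕ) + 1)
    rw [hJ, hL]; exact Or.inl hjl'
  have rIJ : EqvGen s I J := by
    refine EqvGen.rel _ _ (Or.inl ?_)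
    show glueRel u b ((I : ℕ) + 1) ((J : ℕ) + 1)
    rw [hI, hJ]; exact Or.inl hij
  have rLM : EqvGen s L MM := by
    refine EqvGen.rel _ _ (Or.inl ?_)
    show glueRel u b ((L : ℕ) + 1) ((MM : ℕ) + 1)
    rw [hL, hMM]; exact Or.inl hlm
  refine card_quot_eq ?_ ?_
  · -- s ≤ EqvGen s'
    have arcU : ∀ x y : Fin (2 * m), (((x : ℕ) + 1, (y : ℕ) + 1) ∈ u.arcs) →
        EqvGen s' x y := by
      intro x y hxy
      by_cases h1 : (((x : ℕ) + 1, (y : ℕ) + 1) : ℕ × ℕ) = (i, j)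
      · rw [Prod.mk.injEq] at h1
        have hx : x = I := Fin.ext (by omega)
        have hy : y = J := Fin.ext (by omega)
        rw [hx, hy]; exact edgeIJ
      by_cases h2 : (((x : ℕ) + 1, (y : ℕ) + 1) : ℕ × ℕ) = (l, mm)
      · rw [Prod.mk.injEq] at h2
        have hx : x = L := Fin.ext (by omega)
        have hy : y = MM := Fin.ext (by omega)
        rw [hx, hy]
        exact EqvGen.trans _ _ _ (EqvGen.symm _ _ rJL)
          (EqvGen.trans _ _ _ (EqvGen.symm _ _ edgeIJ) rIM)
      · refine EqvGen.rel _ _ (Or.inl ?_)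
        show glueRel v b ((x : ℕ) + 1) ((y : ℕ) + 1)
        exact Or.inl (hcommon _ hxy h1 h2)
    rintro x y (hxy | ⟨rfl, rfl⟩ | ⟨rfl, rfl⟩)
    · rcases hxy with h | h | h | h
      · exact arcU x y h
      · exact EqvGen.symm _ _ (arcU y x h)
      · exact EqvGen.rel _ _ (Or.inl (Or.inr (Or.inr (Or.inl h))))
      · exact EqvGen.rel _ _ (Or.inl (Or.inr (Or.inr (Or.inr h))))
    · exact rIM
    · exact EqvGen.symm _ _ rIM
  · -- s' ≤ EqvGen s
    have arcV : ∀ x y : Fin (2 * m), (((x : ℕ) + 1, (y : ℕ) + 1) ∈ v.arcs) →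
        EqvGen s x y := by
      intro x y hxy
      by_cases h1 : (((x : ℕ) + 1, (y : ℕ) + 1) : ℕ × ℕ) = (i, mm)
      · rw [Prod.mk.injEq] at h1
        have hx : x = I := Fin.ext (by omega)
        have hy : y = MM := Fin.ext (by omega)
        rw [hx, hy]; exact edgeIM
      by_cases h2 : (((x : ℕ) + 1, (y : ℕ) + 1) : ℕ × ℕ) = (j, l)
      · rw [Prod.mk.injEq] at h2
        have hx : x = J := Fin.ext (by omega)
        have hy : y = L := Fin.ext (by omega)
        rw [hx, hy]
        exact EqvGen.trans _ _ _ (EqvGen.symm _ _ rIJ)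
          (EqvGen.trans _ _ _ edgeIM (EqvGen.symm _ _ rLM))
      · refine EqvGen.rel _ _ (Or.inl ?_)
        show glueRel u b ((x : ℕ) + 1) ((y : ℕ) + 1)
        exact Or.inl (hcommon' _ hxy h1 h2)
    rintro x y (hxy | ⟨rfl, rfl⟩ | ⟨rfl, rfl⟩)
    · rcases hxy with h | h | h | h
      · exact arcV x y h
      · exact EqvGen.symm _ _ (arcV y x h)
      · exact EqvGen.rel _ _ (Or.inl (Or.inr (Or.inr (Or.inl h))))
      · exact EqvGen.rel _ _ (Or.inl (Or.inr (Or.inr (Or.inr h))))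
    · exact rIJ
    · exact EqvGen.symm _ _ rIJ

/-- any single move changes the number of components by at most one. -/
lemma move_comps_diff (u v b : NCMatching (2 * m) m) (hmv : Move u v) :
    comps u b ≤ comps v b + 1 ∧ comps v b ≤ comps u b + 1 := by
  rcases hmv with ⟨i, j, l, mm, h1, h2, h3, hij, hlm, hv⟩ | ⟨i, j, l, _, _, hray, _, _⟩
  swap
  · exact absurd hray (by intro hr; exact no_ray u i hr)
  have hri := u.mem_range _ hij
  have hrl := u.mem_range _ hlm
  simp only at hri hrl
  have hbi : i - 1 < 2 * m := by omega
  have hbj : j - 1 < 2 * m := by omega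
  have hbl : l - 1 < 2 * m := by omega
  have hbm : mm - 1 < 2 * m := by omega
  set I : Fin (2 * m) := ⟨i - 1, hbi⟩
  set J : Fin (2 * m) := ⟨j - 1, hbj⟩
  set L : Fin (2 * m) := ⟨l - 1, hbl⟩
  set MM : Fin (2 * m) := ⟨mm - 1, hbm⟩
  have hI : (I : ℕ) + 1 = i := by simp [I]; omega
  have hJ : (J : ℕ) + 1 = j := by simp [J]; omega
  have hL : (L : ℕ) + 1 = l := by simp [L]; omega
  have hMM : (MM : ℕ) + 1 = mm := by simp [MM]; omega
  have hdist : ∀ t ∈ u.arcs, t ≠ (i, j) → t ≠ (l, mm) → t.1 ≠ i ∧ t.1 ≠ j ∧ t.1 ≠ l ∧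
      t.1 ≠ mm ∧ t.2 ≠ i ∧ t.2 ≠ j ∧ t.2 ≠ l ∧ t.2 ≠ mm := by
    intro t ht hne1 hne2
    have d1 := u.endpoints_distinct t ht _ hij hne1
    have d2 := u.endpoints_distinct t ht _ hlm hne2
    simp only at d1 d2
    exact ⟨d1.1, d1.2.1, d2.1, d2.2.1, d1.2.2.1, d1.2.2.2, d2.2.2.1, d2.2.2.2⟩
  have him' : (i, mm) ∈ v.arcs := by rw [hv]; simp
  have hjl' : (j, l) ∈ v.arcs := by
    rw [hv]
    refine Finset.mem_insert_of_mem ?_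
    simp
  have hcommon : ∀ t, t ∈ u.arcs → t ≠ (i, j) → t ≠ (l, mm) → t ∈ v.arcs := by
    intro t ht hne1 hne2
    rw [hv]
    refine Finset.mem_insert_of_mem (Finset.mem_insert_of_mem ?_)
    rw [Finset.mem_erase, Finset.mem_erase]
    exact ⟨hne2, hne1, ht⟩
  have hcommon' : ∀ t, t ∈ v.arcs → t ≠ (i, mm) → t ≠ (j, l) → t ∈ u.arcs := by
    intro t ht hne1 hne2
    rw [hv, Finset.mem_insert, Finset.mem_insert, Finset.mem_erase, Finset.mem_erase] at ht
    tauto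
  have hkey := move_quot_card_eq u v b I J L MM hI hJ hL hMM hij hlm him' hjl'
    hcommon hcommon'
  constructor
  · calc comps u b ≤ Nat.card (Quot (symEdge (glueRelF u b) I MM)) + 1 :=
          card_quot_symEdge_le I MM
      _ = Nat.card (Quot (symEdge (glueRelF v b) I J)) + 1 := by rw [hkey]
      _ ≤ comps v b + 1 := by
          have : Nat.card (Quot (symEdge (glueRelF v b) I J)) ≤ comps v b :=
            card_quot_le (fun x y h => EqvGen.rel _ _ (Or.inl h))
          omega
  · calc comps v b ≤ Nat.card (Quot (symEdge (glueRelF v b) I J)) + 1 :=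
          card_quot_symEdge_le I J
      _ = Nat.card (Quot (symEdge (glueRelF u b) I MM)) + 1 := by rw [hkey]
      _ ≤ comps u b + 1 := by
          have : Nat.card (Quot (symEdge (glueRelF u b) I MM)) ≤ comps u b :=
            card_quot_le (fun x y h => EqvGen.rel _ _ (Or.inl h))
          omega

/-- along any move sequence the component count changes by at most d. -/
lemma seq_comps_bound (b : NCMatching (2 * m) m) :
    ∀ (d : ℕ) (f : Fin (d + 1) → NCMatching (2 * m) m), IsMoveSeq f →
      comps (f (Fin.last d)) b ≤ comps (f 0) b + d := by
  intro d
  induction d with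
  | zero => intro f _; simp
  | succ d ih =>
    intro f hf
    have hstep := hf (Fin.last d)
    have htrunc := ih (fun i => f i.castSucc) (by
      intro i
      have := hf i.castSucc
      rw [Fin.succ_castSucc] at this
      simpa using this)
    have hlast : comps (f (Fin.last (d + 1))) b ≤ comps (f (Fin.last d).castSucc) b + 1 := by
      have : (Fin.last d).succ = Fin.last (d + 1) := by
        ext; simp
      rw [← this]
      rcases hstep with hmv | hmv
      · exact (move_comps_diff _ _ b hmv).2
      · exact (move_comps_diff _ _ b hmv).1
    have h0 : (0 : Fin (d + 1)).castSucc = (0 : Fin (d + 2)) := by ext; simp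
    rw [← h0]
    have := htrunc
    simp only [Fin.last] at this hlast ⊢
    omega

end MoveComps

section Construction
variable {m : ℕ}

def Hyp (a b : NCMatching (2 * m) m) : Prop :=
  ∀ p ∈ a.arcs, ∀ q ∈ a.arcs, p ≠ q → (p.1 < q.1 ∧ q.2 < p.2) → ¬ Conn a b p.1 q.1

def Part2 (a b : NCMatching (2 * m) m) : Prop :=
  ∀ q ∈ b.arcs,
    ((∃ p ∈ a.arcs, q.1 = p.2) ∧ (∃ r ∈ a.arcs, q.2 = r.1) ∧
      ¬ ∃ s ∈ a.arcs, Conn a b q.1 s.1 ∧ q.1 < s.1 ∧ s.2 < q.2) ∨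
    ((∃ p ∈ a.arcs, q.1 = p.1) ∧ (∃ r ∈ a.arcs, q.2 = r.2) ∧
      ∀ v : ℕ, Conn a b q.1 v → q.1 ≤ v ∧ v ≤ q.2)

lemma rtg_to_eqvGen {α : Type*} {r : α → α → Prop} {u v : α}
    (h : Relation.ReflTransGen r u v) : EqvGen r u v := by
  induction h with
  | refl => exact EqvGen.refl _
  | tail _ hstep ih => exact EqvGen.trans _ _ _ ih (EqvGen.rel _ _ hstep)

lemma eqvGen_glue_to_conn (a b : NCMatching (2 * m) m) {u v : ℕ}
    (h : EqvGen (glueRel a b) u v) : Conn a b u v := by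
  induction h with
  | rel x y hr => exact ReflTransGen.single hr
  | refl x => exact ReflTransGen.refl
  | symm x y _ ih => exact conn_symm a b ih
  | trans x y z _ _ ih1 ih2 => exact conn_trans a b ih1 ih2

theorem forward_step (a b : NCMatching (2 * m) m) (h : Hyp a b)
    (hne : a.arcs ≠ b.arcs) :
    ∃ a' : NCMatching (2 * m) m, Move a a' ∧ Hyp a' b ∧
      comps a' b = comps a b + 1 ∧ (Part2 a' b → Part2 a b) := by
  classical
  -- a minimal arc of b not shared with a
  have hDne : (b.arcs \ a.arcs).Nonempty := by
    rw [Finset.sdiff_nonempty]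
    intro hsub
    exact hne (Finset.eq_of_subset_of_card_le hsub (by rw [a.card_arcs, b.card_arcs])).symm
  obtain ⟨⟨j, l⟩, hq0mem, hq0min⟩ := Finset.exists_min_image _ (fun p => p.2 - p.1) hDne
  rw [Finset.mem_sdiff] at hq0mem
  obtain ⟨hjl, hjlna⟩ := hq0mem
  simp only at hq0min
  have hrjl := b.mem_range _ hjl
  simp only at hrjl
  -- interior of (j,l) : every vertex there has its b-arc inside, and that arc is in a
  have hint : ∀ w, j < w → w < l → ∃ e ∈ a.arcs, e ∈ b.arcs ∧ (w = e.1 ∨ w = e.2) ∧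
      j < e.1 ∧ e.2 < l := by
    intro w hw1 hw2
    obtain ⟨e, he, hce⟩ := covered b (c := w) (by omega) (by omega)
    have hne' : e ≠ (j, l) := by
      intro heq; rw [heq] at hce; simp at hce; omega
    have hins := inside b hjl he hne' (by simp only; omega)
    simp only at hins
    have hea : e ∈ a.arcs := by
      by_contra hnea
      have := hq0min e (Finset.mem_sdiff.2 ⟨he, hnea⟩)
      have hre := b.mem_range e he
      omega
    exact ⟨e, hea, he, hce, hins.1, hins.2⟩
  have hintA : ∀ s ∈ a.arcs, (j < s.1 ∧ s.1 < l) ∨ (j < s.2 ∧ s.2 < l) →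
      j < s.1 ∧ s.2 < l := by
    intro s hs hcase
    have hex : ∃ w, (w = s.1 ∨ w = s.2) ∧ j < w ∧ w < l := by
      rcases hcase with ⟨h1, h2⟩ | ⟨h1, h2⟩
      · exact ⟨s.1, Or.inl rfl, h1, h2⟩
      · exact ⟨s.2, Or.inr rfl, h1, h2⟩
    obtain ⟨w, hw, hw1, hw2⟩ := hex
    obtain ⟨e, hea, _, hce, he1, he2⟩ := hint w hw1 hw2
    have : s = e := arc_unique a hs hea hw hce
    subst this
    have hrs := a.mem_range s hs
    omega
  -- the a-arc at j is of the form (x, j)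
  obtain ⟨⟨px, py⟩, hp0, hcp0⟩ := covered a (c := j) (by omega) (by omega)
  have hrp0 := a.mem_range _ hp0
  simp only at hrp0 hcp0
  have hpj : j = py := by
    rcases hcp0 with hc | hc
    · exfalso
      subst hc
      have hyne : py ≠ l := by
        intro heq; rw [heq] at hp0; exact hjlna hp0
      rcases lt_or_gt_of_ne hyne with hlt | hgt
      · have := hintA (j, py) hp0 (Or.inr (by simp only; omega))
        simp only at this; omega
      · obtain ⟨⟨ru, rv⟩, hr0, hcr0⟩ := covered a (c := l) (by omega) (by omega)
        have hrr0 := a.mem_range _ hr0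
        simp only at hrr0 hcr0
        have hr0ne : (ru, rv) ≠ (j, py) := by
          intro he; rw [Prod.mk.injEq] at he; omega
        have hins := inside a hp0 hr0 hr0ne (by simp only; omega)
        simp only at hins
        rcases hcr0 with hc2 | hc2
        · subst hc2
          refine h (j, py) hp0 (l, rv) hr0 (Ne.symm hr0ne) (by simp only; omega) ?_
          exact conn_of_mem_arcs_b a b hjl
        · subst hc2
          have := hintA (ru, l) hr0 (Or.inl (by simp only; omega))
          simp only at this; omega
    · exact hc
  subst hpj
  set x := px with hxdef
  have hxj : (x, j) ∈ a.arcs := hp0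
  have hxlt : x < j := by omega
  -- the a-arc at l is of the form (l, z)
  obtain ⟨⟨ru, rv⟩, hr0, hcr0⟩ := covered a (c := l) (by omega) (by omega)
  have hrr0 := a.mem_range _ hr0
  simp only at hrr0 hcr0
  have hrl : l = ru := by
    rcases hcr0 with hc | hc
    · exact hc
    · exfalso
      subst hc
      have hwnej : ru ≠ j := by
        intro heq; rw [heq] at hr0; exact hjlna hr0
      rcases lt_or_gt_of_ne hwnej with hlt | hgt
      · have hpne : (x, j) ≠ (ru, l) := by intro he; rw [Prod.mk.injEq] at he; omega
        have hins := inside a hr0 hxj hpne (by simp only; omega)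
        simp only at hins
        refine h (ru, l) hr0 (x, j) hxj (Ne.symm hpne) (by simp only; omega) ?_
        have c1 : Conn a b ru l := conn_of_mem_arcs_a a b hr0
        have c2 : Conn a b l j := conn_symm a b (conn_of_mem_arcs_b a b hjl)
        have c3 : Conn a b j x := conn_symm a b (conn_of_mem_arcs_a a b hxj)
        exact conn_trans a b (conn_trans a b c1 c2) c3
      · have := hintA (ru, l) hr0 (Or.inl (by simp only; omega))
        simp only at this; omega
  subst hrl
  set z := rv with hzdef
  have hlz : (l, z) ∈ a.arcs := hr0
  have hllt : l < z := by omega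
  have hjltl : j < l := by omega
  have hxjne : (x, j) ≠ (l, z) := by intro he; rw [Prod.mk.injEq] at he; omega
  -- endpoints of other arcs avoid x, j, l, z
  have hold : ∀ t ∈ a.arcs, t ≠ (x, j) → t ≠ (l, z) →
      t.1 ≠ x ∧ t.1 ≠ j ∧ t.1 ≠ l ∧ t.1 ≠ z ∧ t.2 ≠ x ∧ t.2 ≠ j ∧ t.2 ≠ l ∧ t.2 ≠ z := by
    intro t ht h1 h2
    have d1 := a.endpoints_distinct t ht _ hxj h1
    have d2 := a.endpoints_distinct t ht _ hlz h2
    simp only at d1 d2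
    exact ⟨d1.1, d1.2.1, d2.1, d2.2.1, d1.2.2.1, d1.2.2.2, d2.2.2.1, d2.2.2.2⟩
  -- the new arc set
  set A' : Finset (ℕ × ℕ) :=
    insert (x, z) (insert (j, l) ((a.arcs.erase (x, j)).erase (l, z))) with hA'def
  have hxzna : (x, z) ∉ a.arcs := by
    intro hmem
    have := arc_unique a hmem hxj (Or.inl rfl) (Or.inl rfl)
    rw [Prod.mk.injEq] at this; omega
  have hmemA' : ∀ t, t ∈ A' ↔ t = (x, z) ∨ t = (j, l) ∨
      (t ∈ a.arcs ∧ t ≠ (x, j) ∧ t ≠ (l, z)) := by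
    intro t
    simp only [hA'def, Finset.mem_insert, Finset.mem_erase]
    constructor
    · rintro (rfl | rfl | ⟨h1, h2, h3⟩)
      · exact Or.inl rfl
      · exact Or.inr (Or.inl rfl)
      · exact Or.inr (Or.inr ⟨h3, h2, h1⟩)
    · rintro (rfl | rfl | ⟨h3, h2, h1⟩)
      · exact Or.inl rfl
      · exact Or.inr (Or.inl rfl)
      · exact Or.inr (Or.inr ⟨h1, h2, h3⟩)
  have hxzA' : (x, z) ∈ A' := (hmemA' _).2 (Or.inl rfl)
  have hjlA' : (j, l) ∈ A' := (hmemA' _).2 (Or.inr (Or.inl rfl))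
  -- cardinality
  have hcardA' : A'.card = m := by
    have h1 : (l, z) ∈ a.arcs.erase (x, j) :=
      Finset.mem_erase.2 ⟨Ne.symm hxjne, hlz⟩
    have h2 : ((a.arcs.erase (x, j)).erase (l, z)).card = m - 2 := by
      rw [Finset.card_erase_of_mem h1, Finset.card_erase_of_mem hxj, a.card_arcs]
      omega
    have hm2 : 2 ≤ m := by
      have := Finset.one_lt_card.2 ⟨(x, j), hxj, (l, z), hlz, hxjne⟩
      rw [a.card_arcs] at this; omega
    have h3 : (j, l) ∉ (a.arcs.erase (x, j)).erase (l, z) := by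
      intro hmem
      exact hjlna (Finset.mem_of_mem_erase (Finset.mem_of_mem_erase hmem))
    have h4 : (x, z) ∉ insert (j, l) ((a.arcs.erase (x, j)).erase (l, z)) := by
      intro hmem
      rcases Finset.mem_insert.1 hmem with he | hmem
      · rw [Prod.mk.injEq] at he; omega
      · exact hxzna (Finset.mem_of_mem_erase (Finset.mem_of_mem_erase hmem))
    rw [hA'def, Finset.card_insert_of_notMem h4, Finset.card_insert_of_notMem h3, h2]
    omega
  -- range
  have hrangeA' : ∀ p ∈ A', 1 ≤ p.1 ∧ p.1 < p.2 ∧ p.2 ≤ 2 * m := by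
    intro p hp
    rcases (hmemA' p).1 hp with rfl | rfl | ⟨hmem, _, _⟩
    · simp only
      have h1 := a.mem_range _ hxj
      have h2 := a.mem_range _ hlz
      simp only at h1 h2; omega
    · simp only; omega
    · exact a.mem_range p hmem
  -- endpoints distinct
  have hdistA' : ∀ p ∈ A', ∀ q ∈ A', p ≠ q →
      p.1 ≠ q.1 ∧ p.1 ≠ q.2 ∧ p.2 ≠ q.1 ∧ p.2 ≠ q.2 := by
    intro p hp q hq hpq
    rcases (hmemA' p).1 hp with rfl | rfl | ⟨hpm, hp1, hp2⟩ <;>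
      rcases (hmemA' q).1 hq with rfl | rfl | ⟨hqm, hq1, hq2⟩
    · exact absurd rfl hpq
    · simp only; omega
    · have := hold q hqm hq1 hq2; simp only; omega
    · simp only; omega
    · exact absurd rfl hpq
    · have := hold q hqm hq1 hq2; simp only; omega
    · have := hold p hpm hp1 hp2; simp only; omega
    · have := hold p hpm hp1 hp2; simp only; omega
    · exact a.endpoints_distinct p hpm q hqm hpq
  -- noncrossing
  have hcrossA' : ∀ p ∈ A', ∀ q ∈ A', ¬ (p.1 < q.1 ∧ q.1 < p.2 ∧ p.2 < q.2) := by
    intro p hp q hq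
    rcases (hmemA' p).1 hp with rfl | rfl | ⟨hpm, hp1, hp2⟩ <;>
      rcases (hmemA' q).1 hq with rfl | rfl | ⟨hqm, hq1, hq2⟩
    · simp only; omega
    · simp only; omega
    · -- (x,z) vs old q
      simp only
      rintro ⟨hc1, hc2, hc3⟩
      have hq' := hold q hqm hq1 hq2
      have hrq := a.mem_range q hqm
      rcases (show q.1 < j ∨ (j < q.1 ∧ q.1 < l) ∨ l < q.1 by omega) with hq1' | hq1' | hq1'
      · exact a.noncross _ hxj q hqm (by simp only; omega)
      · have := hintA q hqm (Or.inl hq1'); omega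
      · exact a.noncross _ hlz q hqm (by simp only; omega)
    · simp only; omega
    · simp only; omega
    · -- (j,l) vs old q
      simp only
      rintro ⟨hc1, hc2, hc3⟩
      have := hintA q hqm (Or.inl ⟨hc1, hc2⟩)
      omega
    · -- old p vs (x,z)
      simp only
      rintro ⟨hc1, hc2, hc3⟩
      have hp' := hold p hpm hp1 hp2
      have hrp := a.mem_range p hpm
      rcases (show p.2 < j ∨ (j < p.2 ∧ p.2 < l) ∨ l < p.2 by omega) with hp2' | hp2' | hp2'
      · exact a.noncross p hpm _ hxj (by simp only; omega)
      · have := hintA p hpm (Or.inr hp2'); omega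
      · exact a.noncross p hpm _ hlz (by simp only; omega)
    · -- old p vs (j,l)
      simp only
      rintro ⟨hc1, hc2, hc3⟩
      have := hintA p hpm (Or.inr ⟨hc2, hc3⟩)
      omega
    · exact a.noncross p hpm q hqm
  -- no rays
  have hrayA' : ∀ p ∈ A', ∀ r, p.1 < r → r < p.2 → ∃ q ∈ A', r = q.1 ∨ r = q.2 := by
    intro p hp r h1 h2
    have hrp := hrangeA' p hp
    obtain ⟨t, ht, hct⟩ := covered a (c := r) (by omega) (by omega)
    by_cases hc1 : t = (x, j)
    · subst hc1
      simp only at hct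
      rcases hct with hcr | hcr
      · exact ⟨(x, z), hxzA', Or.inl hcr⟩
      · exact ⟨(j, l), hjlA', Or.inl hcr⟩
    by_cases hc2 : t = (l, z)
    · subst hc2
      simp only at hct
      rcases hct with hcr | hcr
      · exact ⟨(j, l), hjlA', Or.inr hcr⟩
      · exact ⟨(x, z), hxzA', Or.inr hcr⟩
    · exact ⟨t, (hmemA' t).2 (Or.inr (Or.inr ⟨ht, hc1, hc2⟩)), hct⟩
  set a' : NCMatching (2 * m) m :=
    ⟨A', hcardA', hrangeA', hdistA', hcrossA', hrayA'⟩ with ha'def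
  have ha'arcs : a'.arcs = A' := rfl
  have hMove : Move a a' := by
    left
    exact ⟨x, j, l, z, hxlt, hjltl, hllt, hxj, hlz, rfl⟩
  -- unique arcs at j and l in A'
  have harcJ : ∀ t ∈ A', (t.1 = j ∨ t.2 = j) → t = (j, l) := by
    intro t ht hend
    rcases (hmemA' t).1 ht with rfl | rfl | ⟨hm, h1, h2⟩
    · simp only at hend; omega
    · rfl
    · have := hold t hm h1 h2; omega
  have harcL : ∀ t ∈ A', (t.1 = l ∨ t.2 = l) → t = (j, l) := by
    intro t ht hend
    rcases (hmemA' t).1 ht with rfl | rfl | ⟨hm, h1, h2⟩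
    · simp only at hend; omega
    · rfl
    · have := hold t hm h1 h2; omega
  -- decomposition of glue edges into arcs, for both weaves
  have hglue_arc : ∀ (c : NCMatching (2 * m) m) w v, glueRel c b w v →
      ∃ e, (e ∈ c.arcs ∨ e ∈ b.arcs) ∧ ((w = e.1 ∧ v = e.2) ∨ (w = e.2 ∧ v = e.1)) := by
    intro c w v hg
    rcases hg with hA | hA | hB | hB
    · exact ⟨_, Or.inl hA, Or.inl ⟨rfl, rfl⟩⟩
    · exact ⟨_, Or.inl hA, Or.inr ⟨rfl, rfl⟩⟩
    · exact ⟨_, Or.inr hB, Or.inl ⟨rfl, rfl⟩⟩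
    · exact ⟨_, Or.inr hB, Or.inr ⟨rfl, rfl⟩⟩
  -- the component of j in a' w(b) is {j, l}
  have hcompJL : ∀ v, Conn a' b j v → v = j ∨ v = l := by
    intro v hc
    refine conn_closed a' b (S := fun v => v = j ∨ v = l) ?_ (Or.inl rfl) hc
    intro w' v' hw' hg
    obtain ⟨e, hemem, hecase⟩ := hglue_arc a' w' v' hg
    have hwe : w' = e.1 ∨ w' = e.2 := by
      rcases hecase with ⟨h1, _⟩ | ⟨h1, _⟩
      exacts [Or.inl h1, Or.inr h1]
    have he_jl : e = (j, l) := by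
      rcases hemem with hA | hB
      · rcases hwe with hwe | hwe <;> rcases hw' with hw' | hw'
        · exact harcJ e hA (Or.inl (by omega))
        · exact harcL e hA (Or.inl (by omega))
        · exact harcJ e hA (Or.inr (by omega))
        · exact harcL e hA (Or.inr (by omega))
      · exact arc_unique b hB hjl (c := w') hwe hw'
    have h12 : e.1 = j ∧ e.2 = l := by rw [he_jl]; exact ⟨rfl, rfl⟩
    rcases hecase with ⟨_, h2⟩ | ⟨_, h2⟩ <;> omega
  -- interior closure facts
  have hintA'arc : ∀ t ∈ A', (j < t.1 ∧ t.1 < l) ∨ (j < t.2 ∧ t.2 < l) →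
      j < t.1 ∧ t.2 < l := by
    intro t ht hcase
    rcases (hmemA' t).1 ht with rfl | rfl | ⟨hm, _, _⟩
    · simp only at hcase ⊢; omega
    · simp only at hcase ⊢; omega
    · exact hintA t hm hcase
  have hintB : ∀ e ∈ b.arcs, (j < e.1 ∧ e.1 < l) ∨ (j < e.2 ∧ e.2 < l) →
      j < e.1 ∧ e.2 < l := by
    intro e he hcase
    by_cases hne' : e = (j, l)
    · subst hne'; simp only at hcase ⊢; omega
    · have := inside b hjl he hne' (by simpa using hcase)
      simpa using this
  have hcompInt : ∀ w v, j < w → w < l → Conn a' b w v → j < v ∧ v < l := by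
    intro w v hw1 hw2 hc
    refine conn_closed a' b (S := fun v => j < v ∧ v < l) ?_ ⟨hw1, hw2⟩ hc
    intro w' v' hw' hg
    obtain ⟨e, hemem, hecase⟩ := hglue_arc a' w' v' hg
    have hbound : j < e.1 ∧ e.2 < l := by
      rcases hemem with hA | hB
      · exact hintA'arc e hA (by rcases hecase with ⟨h1, _⟩ | ⟨h1, _⟩ <;> omega)
      · exact hintB e hB (by rcases hecase with ⟨h1, _⟩ | ⟨h1, _⟩ <;> omega)
    have hre : e.1 < e.2 := by
      rcases hemem with hA | hB
      · exact (hrangeA' e hA).2.1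
      · exact (b.mem_range e hB).2.1
    rcases hecase with ⟨_, h2⟩ | ⟨_, h2⟩ <;> omega
  have hcompIntOld : ∀ w v, j < w → w < l → Conn a b w v → j < v ∧ v < l := by
    intro w v hw1 hw2 hc
    refine conn_closed a b (S := fun v => j < v ∧ v < l) ?_ ⟨hw1, hw2⟩ hc
    intro w' v' hw' hg
    obtain ⟨e, hemem, hecase⟩ := hglue_arc a w' v' hg
    have hbound : j < e.1 ∧ e.2 < l := by
      rcases hemem with hA | hB
      · exact hintA e hA (by rcases hecase with ⟨h1, _⟩ | ⟨h1, _⟩ <;> omega)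
      · exact hintB e hB (by rcases hecase with ⟨h1, _⟩ | ⟨h1, _⟩ <;> omega)
    have hre : e.1 < e.2 := by
      rcases hemem with hA | hB
      · exact (a.mem_range e hA).2.1
      · exact (b.mem_range e hB).2.1
    rcases hecase with ⟨_, h2⟩ | ⟨_, h2⟩ <;> omega
  -- connectivity in the new weave implies connectivity in the old one
  have hconn_xz : Conn a b x z := by
    refine conn_trans a b (conn_of_mem_arcs_a a b hxj) ?_
    exact conn_trans a b (conn_of_mem_arcs_b a b hjl) (conn_of_mem_arcs_a a b hlz)
  have harc'le : ∀ w v, (w, v) ∈ A' → Conn a b w v := by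
    intro w v hA
    rcases (hmemA' _).1 hA with he | he | ⟨hm, _, _⟩
    · rw [Prod.mk.injEq] at he; obtain ⟨rfl, rfl⟩ := he
      exact hconn_xz
    · rw [Prod.mk.injEq] at he; obtain ⟨rfl, rfl⟩ := he
      exact conn_of_mem_arcs_b a b hjl
    · exact conn_of_mem_arcs_a a b hm
  have hConnle : ∀ c d, Conn a' b c d → Conn a b c d := by
    intro c d hc
    induction hc with
    | refl => exact ReflTransGen.refl
    | tail _ hstep ih =>
      refine conn_trans a b ih ?_
      rcases hstep with hA | hA | hB | hB
      · exact harc'le _ _ hA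
      · exact conn_symm a b (harc'le _ _ hA)
      · exact ReflTransGen.single (Or.inr (Or.inr (Or.inl hB)))
      · exact ReflTransGen.single (Or.inr (Or.inr (Or.inr hB)))
  -- decomposition of old connectivity through the new weave
  have hdecomp : ∀ c d, Conn a b c d → Conn a' b c d ∨
      (Conn a' b c x ∧ Conn a' b j d) ∨ (Conn a' b c j ∧ Conn a' b x d) := by
    intro c d hc
    have haux : ∀ u v, (u, v) ∈ a.arcs → EqvGen (symEdge (glueRel a' b) x j) u v := by
      intro u v hA
      by_cases h1 : ((u, v) : ℕ × ℕ) = (x, j)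
      · rw [Prod.mk.injEq] at h1; obtain ⟨rfl, rfl⟩ := h1
        exact EqvGen.rel _ _ (Or.inr (Or.inl ⟨rfl, rfl⟩))
      by_cases h2 : ((u, v) : ℕ × ℕ) = (l, z)
      · rw [Prod.mk.injEq] at h2; obtain ⟨rfl, rfl⟩ := h2
        have e1 : EqvGen (symEdge (glueRel a' b) x j) u j :=
          EqvGen.rel _ _ (Or.inl (Or.inr (Or.inl hjlA')))
        have e2 : EqvGen (symEdge (glueRel a' b) x j) j x :=
          EqvGen.rel _ _ (Or.inr (Or.inr ⟨rfl, rfl⟩))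
        have e3 : EqvGen (symEdge (glueRel a' b) x j) x v :=
          EqvGen.rel _ _ (Or.inl (Or.inl hxzA'))
        exact EqvGen.trans _ _ _ e1 (EqvGen.trans _ _ _ e2 e3)
      · refine EqvGen.rel _ _ (Or.inl (Or.inl ?_))
        exact (hmemA' _).2 (Or.inr (Or.inr ⟨hA, h1, h2⟩))
    have hsub : ∀ u v, glueRel a b u v → EqvGen (symEdge (glueRel a' b) x j) u v := by
      intro u v hg
      rcases hg with hA | hA | hB | hB
      · exact haux u v hA
      · exact EqvGen.symm _ _ (haux v u hA)
      · exact EqvGen.rel _ _ (Or.inl (Or.inr (Or.inr (Or.inl hB))))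
      · exact EqvGen.rel _ _ (Or.inl (Or.inr (Or.inr (Or.inr hB))))
    have h1 : EqvGen (symEdge (glueRel a' b) x j) c d :=
      eqvGen_mono hsub (rtg_to_eqvGen hc)
    rcases eqvGen_symEdge_decomp h1 with h2 | ⟨h2, h3⟩ | ⟨h2, h3⟩
    · exact Or.inl (eqvGen_glue_to_conn a' b h2)
    · exact Or.inr (Or.inl ⟨eqvGen_glue_to_conn a' b h2, eqvGen_glue_to_conn a' b h3⟩)
    · exact Or.inr (Or.inr ⟨eqvGen_glue_to_conn a' b h2, eqvGen_glue_to_conn a' b h3⟩)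
  -- the component count increases by exactly one
  have hrx := a.mem_range _ hxj
  have hrz := a.mem_range _ hlz
  simp only at hrx hrz
  have hbx : x - 1 < 2 * m := by omega
  have hbj : j - 1 < 2 * m := by omega
  have hbl : l - 1 < 2 * m := by omega
  have hbz : z - 1 < 2 * m := by omega
  have hcomps : comps a' b = comps a b + 1 := by
    set I : Fin (2 * m) := ⟨x - 1, hbx⟩ with hIdef
    set J : Fin (2 * m) := ⟨j - 1, hbj⟩ with hJdef
    set L : Fin (2 * m) := ⟨l - 1, hbl⟩ with hLdef
    set Z : Fin (2 * m) := ⟨z - 1, hbz⟩ with hZdef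
    have hI : (I : ℕ) + 1 = x := by simp [hIdef]; omega
    have hJ : (J : ℕ) + 1 = j := by simp [hJdef]; omega
    have hL : (L : ℕ) + 1 = l := by simp [hLdef]; omega
    have hZ : (Z : ℕ) + 1 = z := by simp [hZdef]; omega
    have hcommon : ∀ t, t ∈ a.arcs → t ≠ (x, j) → t ≠ (l, z) → t ∈ a'.arcs := by
      intro t ht h1 h2
      exact (hmemA' t).2 (Or.inr (Or.inr ⟨ht, h1, h2⟩))
    have hcommon' : ∀ t, t ∈ a'.arcs → t ≠ (x, z) → t ≠ (j, l) → t ∈ a.arcs := by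
      intro t ht h1 h2
      rcases (hmemA' t).1 ht with he | he | ⟨hm, _, _⟩
      · exact absurd he h1
      · exact absurd he h2
      · exact hm
    have hkey := move_quot_card_eq a a' b I J L Z hI hJ hL hZ hxj hlz hxzA' hjlA'
      hcommon hcommon'
    have hQab : comps a b = Nat.card (Quot (symEdge (glueRelF a b) I Z)) := by
      refine card_quot_eq ?_ ?_
      · intro u v hr
        exact EqvGen.rel _ _ (Or.inl hr)
      · rintro u v (hr | ⟨rfl, rfl⟩ | ⟨rfl, rfl⟩)
        · exact EqvGen.rel _ _ hr
        · exact conn_to_eqvGen' a b hconn_xz hbx hbz (Or.inr ⟨by omega, by omega⟩)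
        · exact EqvGen.symm _ _
            (conn_to_eqvGen' a b hconn_xz hbx hbz (Or.inr ⟨by omega, by omega⟩))
    have hnIJ : ¬ EqvGen (glueRelF a' b) I J := by
      intro hE
      have := eqvGen_to_conn a' b hE
      rw [hI, hJ] at this
      have := hcompJL x (conn_symm a' b this)
      omega
    have hQa'b : comps a' b = Nat.card (Quot (symEdge (glueRelF a' b) I J)) + 1 :=
      card_quot_symEdge_eq hnIJ
    rw [hQa'b, ← hkey, ← hQab]
  -- the hypothesis persists for the new matching
  have h' : Hyp a' b := by
    intro p' hp' q' hq' hne' hnest hconn'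
    rcases (hmemA' p').1 hp' with hp'e | hp'e | ⟨hpm, hpne1, hpne2⟩ <;>
      rcases (hmemA' q').1 hq' with hq'e | hq'e | ⟨hqm, hqne1, hqne2⟩
    · exact hne' (hp'e.trans hq'e.symm)
    · -- (x,z) vs (j,l): x and j are not connected in a' w(b)
      subst hp'e; subst hq'e
      simp only at hconn'
      have := hcompJL x (conn_symm a' b hconn')
      omega
    · -- (x,z) over an old arc
      subst hp'e
      simp only at hconn' hnest
      have hq'r := a.mem_range q' hqm
      have hconnAB : Conn a b x q'.1 := hConnle _ _ hconn'
      rcases (show q'.1 < j ∨ q'.1 = j ∨ (j < q'.1 ∧ q'.1 < l) ∨ q'.1 = l ∨ l < q'.1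
          by omega) with hc | hc | hc | hc | hc
      · have hncr := a.noncross _ hxj q' hqm
        simp only at hncr
        have hq2j : q'.2 ≠ j := by
          intro heq
          exact hqne1 (arc_unique a hqm hxj (Or.inr heq.symm) (Or.inr rfl))
        exact h _ hxj q' hqm (Ne.symm hqne1) (by simp only; omega) hconnAB
      · exact hqne1 (arc_unique a hqm hxj (Or.inl hc.symm) (Or.inr rfl))
      · have := hcompInt q'.1 x hc.1 hc.2 (conn_symm a' b hconn')
        omega
      · exact hqne2 (arc_unique a hqm hlz (Or.inl hc.symm) (Or.inl rfl))
      · have hlx : Conn a b l x :=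
          conn_trans a b (conn_symm a b (conn_of_mem_arcs_b a b hjl))
            (conn_symm a b (conn_of_mem_arcs_a a b hxj))
        exact h _ hlz q' hqm (Ne.symm hqne2) (by simp only; omega)
          (conn_trans a b hlx hconnAB)
    · subst hp'e; subst hq'e
      simp only at hnest
      omega
    · exact hne' (hp'e.trans hq'e.symm)
    · -- (j,l) over an old arc
      subst hp'e
      simp only at hconn' hnest
      have hq'r := a.mem_range q' hqm
      have := hcompJL q'.1 hconn'
      omega
    · -- old arc over (x,z)
      subst hq'e
      simp only at hconn' hnest
      refine h p' hpm _ hxj hpne1 (by simp only; omega) ?_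
      exact hConnle _ _ hconn'
    · -- old arc over (j,l)
      subst hq'e
      simp only at hconn' hnest
      have := hcompJL p'.1 (conn_symm a' b hconn')
      omega
    · exact h p' hpm q' hqm hne' hnest (hConnle _ _ hconn')
  -- transfer of the structure statement
  have hP2 : Part2 a' b → Part2 a b := by
    intro hP q hq
    by_cases hqjl : q = (j, l)
    · subst hqjl
      refine Or.inl ⟨⟨(x, j), hxj, rfl⟩, ⟨(l, z), hlz, rfl⟩, ?_⟩
      rintro ⟨s, hs, hconn_s, hs1, hs2⟩
      simp only at hconn_s hs1 hs2
      have hrs := a.mem_range s hs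
      have := hcompIntOld s.1 j hs1 (by omega) (conn_symm a b hconn_s)
      omega
    · have hrq := b.mem_range q hq
      have hq1j : q.1 ≠ j := fun heq =>
        hqjl (arc_unique b hq hjl (Or.inl heq.symm) (Or.inl rfl))
      have hq1l : q.1 ≠ l := fun heq =>
        hqjl (arc_unique b hq hjl (Or.inl heq.symm) (Or.inr rfl))
      have hq2j : q.2 ≠ j := fun heq =>
        hqjl (arc_unique b hq hjl (Or.inr heq.symm) (Or.inl rfl))
      have hq2l : q.2 ≠ l := fun heq =>
        hqjl (arc_unique b hq hjl (Or.inr heq.symm) (Or.inr rfl))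
      have hqedge' : Conn a' b q.1 q.2 := conn_of_mem_arcs_b a' b hq
      rcases hP q hq with ⟨⟨p', hp', hc1⟩, ⟨r', hr', hd1⟩, neg'⟩ |
        ⟨⟨p', hp', hc1⟩, ⟨r', hr', hd1⟩, bound'⟩
      · -- branch 1
        left
        have E1 : ∃ p ∈ a.arcs, q.1 = p.2 := by
          rcases (hmemA' p').1 hp' with rfl | rfl | ⟨hm, _, _⟩
          · exact ⟨(l, z), hlz, hc1⟩
          · exact absurd hc1 (by simpa using hq1l)
          · exact ⟨p', hm, hc1⟩
        have E2 : ∃ r ∈ a.arcs, q.2 = r.1 := by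
          rcases (hmemA' r').1 hr' with rfl | rfl | ⟨hm, _, _⟩
          · exact ⟨(x, j), hxj, hd1⟩
          · exact absurd hd1 (by simpa using hq2j)
          · exact ⟨r', hm, hd1⟩
        refine ⟨E1, E2, ?_⟩
        rintro ⟨s, hs, hconn_s, hs1, hs2⟩
        have hrs := a.mem_range s hs
        rcases hdecomp q.1 s.1 hconn_s with hD | ⟨hD1, hD2⟩ | ⟨hD1, hD2⟩
        · by_cases hsxj : s = (x, j)
          · rw [hsxj] at hD hs1 hs2
            simp only at hD hs1 hs2
            rcases (show (j < q.2 ∧ q.2 < l) ∨ q.2 = l ∨ (l < q.2 ∧ q.2 < z) ∨ q.2 = z ∨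
                z < q.2 by omega) with hc | hc | hc | hc | hc
            · have := hcompInt q.2 q.1 hc.1 hc.2 (conn_symm a' b hqedge')
              omega
            · exact hq2l hc
            · obtain ⟨t, ht, hct⟩ := covered a' (c := q.2) (by omega) (by omega)
              have htxz : t ≠ (x, z) := by
                intro heq; rw [heq] at hct; simp only at hct; omega
              have hins := inside a' hxzA' ht htxz
                (by rcases hct with h1 | h1 <;> simp only <;> omega)
              simp only at hins
              refine h' _ hxzA' t ht (Ne.symm htxz) (by simp only; omega) ?_
              have c1 : Conn a' b x q.1 := conn_symm a' b hD
              have c2 : Conn a' b q.2 t.1 := by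
                rcases hct with h1 | h1
                · rw [h1]; exact ReflTransGen.refl
                · rw [h1]; exact conn_symm a' b (conn_of_mem_arcs_a a' b ht)
              exact conn_trans a' b (conn_trans a' b c1 hqedge') c2
            · exfalso
              have hr'xz : r' = (x, z) :=
                arc_unique a' hr' hxzA' (Or.inl (hc.symm.trans hd1)) (Or.inr rfl)
              rw [hr'xz] at hd1
              simp only at hd1
              omega
            · exact neg' ⟨(x, z), hxzA', hD, by simp only; omega⟩
          by_cases hslz : s = (l, z)
          · rw [hslz] at hD
            simp only at hD
            have hjq1 : Conn a' b j q.1 := by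
              refine conn_trans a' b ?_ (conn_symm a' b hD)
              exact conn_of_mem_arcs_a a' b hjlA'
            have := hcompJL q.1 hjq1
            omega
          · exact neg' ⟨s, (hmemA' s).2 (Or.inr (Or.inr ⟨hs, hsxj, hslz⟩)), hD, hs1, hs2⟩
        · -- Conn a' b q.1 x ∧ Conn a' b j s.1
          rcases hcompJL s.1 hD2 with hsj | hsl
          · have hsval : s = (x, j) := arc_unique a hs hxj (Or.inl hsj.symm) (Or.inr rfl)
            rw [hsval] at hsj
            simp only at hsj
            omega
          · have hseq : s = (l, z) := arc_unique a hs hlz (Or.inl hsl.symm) (Or.inl rfl)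
            rw [hseq] at hs1 hs2
            simp only at hs1 hs2
            rcases (show q.1 < x ∨ q.1 = x ∨ x < q.1 by omega) with hcx | hcx | hcx
            · exact neg' ⟨(x, z), hxzA', hD1, by simp only; omega⟩
            · exfalso
              have hp'xz : p' = (x, z) :=
                arc_unique a' hp' hxzA' (Or.inr (hcx.symm.trans hc1)) (Or.inl rfl)
              rw [hp'xz] at hc1
              simp only at hc1
              omega
            · have hconnABx : Conn a b q.1 x := hConnle _ _ hD1
              rcases (show (x < q.1 ∧ q.1 < j) ∨ q.1 = j ∨ j < q.1 by omega)
                with hcq | hcq | hcq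
              · obtain ⟨t, ht, hct⟩ := covered a (c := q.1) (by omega) (by omega)
                have htne : t ≠ (x, j) := by
                  intro heq; rw [heq] at hct; simp only at hct; omega
                have hins := inside a hxj ht htne
                  (by rcases hct with h1 | h1 <;> simp only <;> omega)
                simp only at hins
                refine h _ hxj t ht (Ne.symm htne) (by simp only; omega) ?_
                have c2 : Conn a b q.1 t.1 := by
                  rcases hct with h1 | h1
                  · rw [h1]; exact ReflTransGen.refl
                  · rw [h1]; exact conn_symm a b (conn_of_mem_arcs_a a b ht)
                exact conn_trans a b (conn_symm a b hconnABx) c2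
              · exact absurd hcq hq1j
              · have := hcompIntOld q.1 x hcq (by omega) hconnABx
                omega
        · have := hcompJL q.1 (conn_symm a' b hD1)
          omega
      · -- branch 2
        right
        have E1 : ∃ p ∈ a.arcs, q.1 = p.1 := by
          rcases (hmemA' p').1 hp' with rfl | rfl | ⟨hm, _, _⟩
          · exact ⟨(x, j), hxj, hc1⟩
          · exact absurd hc1 (by simpa using hq1j)
          · exact ⟨p', hm, hc1⟩
        have E2 : ∃ r ∈ a.arcs, q.2 = r.2 := by
          rcases (hmemA' r').1 hr' with rfl | rfl | ⟨hm, _, _⟩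
          · exact ⟨(l, z), hlz, hd1⟩
          · exact absurd hd1 (by simpa using hq2l)
          · exact ⟨r', hm, hd1⟩
        refine ⟨E1, E2, ?_⟩
        intro v hconn_v
        rcases hdecomp q.1 v hconn_v with hD | ⟨hD1, hD2⟩ | ⟨hD1, hD2⟩
        · exact bound' v hD
        · have hvjl := hcompJL v hD2
          have hbx' := bound' x hD1
          have hxq2 : x ≠ q.2 := by
            intro heq
            have hr'xz : r' = (x, z) :=
              arc_unique a' hr' hxzA' (Or.inr (heq.trans hd1)) (Or.inl rfl)
            rw [hr'xz] at hd1
            simp only at hd1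
            omega
          have hjq2 : j < q.2 := by
            by_contra hjq
            push_neg at hjq
            have hx2 : x < q.2 := by omega
            have hq2j' : q.2 < j := by omega
            obtain ⟨t, ht, hct⟩ := covered a (c := q.2) (by omega) (by omega)
            have htne : t ≠ (x, j) := by
              intro heq; rw [heq] at hct; simp only at hct; omega
            have hins := inside a hxj ht htne
              (by rcases hct with h1 | h1 <;> simp only <;> omega)
            simp only at hins
            refine h _ hxj t ht (Ne.symm htne) (by simp only; omega) ?_
            have c1 : Conn a b x q.1 := conn_symm a b (hConnle _ _ hD1)
            have c2 : Conn a b q.1 q.2 := conn_of_mem_arcs_b a b hq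
            have c3 : Conn a b q.2 t.1 := by
              rcases hct with h1 | h1
              · rw [h1]; exact ReflTransGen.refl
              · rw [h1]; exact conn_symm a b (conn_of_mem_arcs_a a b ht)
            exact conn_trans a b (conn_trans a b c1 c2) c3
          have hlq2 : l < q.2 := by
            have hins := inside b hq hjl (fun he => hqjl he.symm)
              (Or.inl ⟨by simp only; omega, by simp only; omega⟩)
            simp only at hins
            omega
          rcases hvjl with rfl | rfl <;> omega
        · have := hcompJL q.1 (conn_symm a' b hD1)
          omega
  exact ⟨a', hMove, h', hcomps, hP2⟩

lemma part2_self (b : NCMatching (2 * m) m) : Part2 b b := by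
  intro q hq
  right
  refine ⟨⟨q, hq, rfl⟩, ⟨q, hq, rfl⟩, ?_⟩
  intro v hconn
  have hr := b.mem_range q hq
  rcases conn_self_pair b hq hconn with rfl | rfl <;> omega

lemma key (b : NCMatching (2 * m) m) : ∀ μ : ℕ, ∀ a : NCMatching (2 * m) m,
    Hyp a b → m - comps a b = μ →
    Part2 a b ∧ ∃ f : Fin (μ + 1) → NCMatching (2 * m) m,
      f 0 = a ∧ f (Fin.last μ) = b ∧ ∀ i : Fin μ, Move (f i.castSucc) (f i.succ) := by
  intro μ
  induction μ with
  | zero =>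
    intro a ha hμ
    have hle := comps_le a b
    have hceq : comps a b = m := by omega
    have hab : a = b := ext_arcs (arcs_eq_of_comps_eq a b hceq)
    subst hab
    exact ⟨part2_self a, fun _ => a, rfl, rfl, fun i => i.elim0⟩
  | succ μ ih =>
    intro a ha hμ
    have hne : a.arcs ≠ b.arcs := by
      intro he
      have hab : a = b := ext_arcs he
      subst hab
      have := comps_self a
      omega
    obtain ⟨a', hmv, ha', hcomps, hp2⟩ := forward_step a b ha hne
    have hlt : comps a b < m := by
      have hle := comps_le a b
      rcases lt_or_eq_of_le hle with hc | hc
      · exact hc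
      · exact absurd (arcs_eq_of_comps_eq a b hc) hne
    have hμ' : m - comps a' b = μ := by rw [hcomps]; omega
    obtain ⟨hpart2', f', hf0, hflast, hfmv⟩ := ih a' ha' hμ'
    refine ⟨hp2 hpart2', Fin.cases a f', ?_, ?_, ?_⟩
    · simp
    · have hl : Fin.last (μ + 1) = (Fin.last μ).succ := by ext; simp
      rw [hl]
      simp only [Fin.cases_succ]
      exact hflast
    · intro i
      refine Fin.cases ?_ ?_ i
      · have h1 : (0 : Fin (μ + 1)).castSucc = (0 : Fin (μ + 2)) := by ext; simp
        rw [h1]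
        have h2 : (0 : Fin (μ + 1)).succ = Fin.succ (0 : Fin (μ + 1)) := rfl
        rw [h2]
        simp only [Fin.cases_succ, Fin.cases_zero, hf0]
        exact hmv
      · intro k
        rw [← Fin.succ_castSucc]
        simp only [Fin.cases_succ]
        exact hfmv k

end Construction
end NCM

/-- If no pair of nested arcs of `a` lies on the same circle of `a w(b)`, then (1) the arcs
of `a` on any given component are pairwise unnested; (2) every arc of `b` either joins the
right endpoint of one `a`-arc of its component to the left endpoint of the next one (with
no `a`-arc of the component strictly between), or joins the leftmost and rightmost
vertices of its component; and (3) there is a minimal move sequence from `a` to `b`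
consisting entirely of forward moves `→`. -/
theorem no_nested_implies_forward_sequence (m : ℕ) (a b : NCMatching (2 * m) m)
    (h : ∀ p ∈ a.arcs, ∀ q ∈ a.arcs, p ≠ q → (p.1 < q.1 ∧ q.2 < p.2) → ¬ Conn a b p.1 q.1) :
    (∀ p ∈ a.arcs, ∀ q ∈ a.arcs, Conn a b p.1 q.1 → p = q ∨ p.2 < q.1 ∨ q.2 < p.1) ∧
    (∀ q ∈ b.arcs,
      ((∃ p ∈ a.arcs, q.1 = p.2) ∧ (∃ r ∈ a.arcs, q.2 = r.1) ∧
        ¬ ∃ s ∈ a.arcs, Conn a b q.1 s.1 ∧ q.1 < s.1 ∧ s.2 < q.2) ∨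
      ((∃ p ∈ a.arcs, q.1 = p.1) ∧ (∃ r ∈ a.arcs, q.2 = r.2) ∧
        ∀ v : ℕ, Conn a b q.1 v → q.1 ≤ v ∧ v ≤ q.2)) ∧
    (∃ f : Fin (mdist a b + 1) → NCMatching (2 * m) m,
      f 0 = a ∧ f (Fin.last (mdist a b)) = b ∧
      ∀ i : Fin (mdist a b), Move (f i.castSucc) (f i.succ)) := by
  refine ⟨?_, ?_, ?_⟩
  · intro p hp q hq hconn
    by_cases hpq : p = q
    · exact Or.inl hpq
    · right
      have d := a.endpoints_distinct p hp q hq hpq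
      have n1 := a.noncross p hp q hq
      have n2 := a.noncross q hq p hp
      have rp := a.mem_range p hp
      have rq := a.mem_range q hq
      have hnp : ¬(p.1 < q.1 ∧ q.2 < p.2) := fun hn => h p hp q hq hpq hn hconn
      have hnq : ¬(q.1 < p.1 ∧ p.2 < q.2) := fun hn =>
        h q hq p hp (Ne.symm hpq) hn (NCM.conn_symm a b hconn)
      omega
  · exact (NCM.key b (m - comps a b) a h rfl).1
  · obtain ⟨hpart2, f, hf0, hfl, hfmv⟩ := NCM.key b (m - comps a b) a h rfl
    have hmd : mdist a b = m - comps a b := by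
      apply le_antisymm
      · exact Nat.sInf_le ⟨f, hf0, hfl, fun i => Or.inl (hfmv i)⟩
      · refine le_csInf ⟨_, f, hf0, hfl, fun i => Or.inl (hfmv i)⟩ ?_
        rintro d ⟨g, hg0, hgl, hgmv⟩
        have hb := NCM.seq_comps_bound b d g hgmv
        rw [hg0, hgl, NCM.comps_self] at hb
        omega
    rw [hmd]
    exact ⟨f, hf0, hfl, hfmv⟩
end
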